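/- arXiv:1908.06174 — 4 statements merged into one kernel-verified Lean document; each statement's English description precedes it below -/
import Mathlib

section
/- Let k be a field of characteristic 2 and let \mathcal{H} be the k-algebra generated by two elements T, S subject to the relations T^2 = 1 and (S+1)S = 0. Let M_1 be the right \mathcal{H}-module with basis v satisfying vT = v, vS = 0, and let M_{Ind} be the 2-dimensional right \mathcal{H}-module with basis v_1, v_2 satisfying v_1 T = v_1, v_2 T = v_2, v_1 S = 0, v_2 S = v_1 + v_2. Then Ext^1_{\mathcal{H}}(M_{Ind}, M_1) \neq 0. -/
/-- The defining relations `T² = 1` and `(S+1)S = 0` of the (fixed determinant) pro-`2`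
Iwahori Hecke algebra of `GL₂(ℚ₂)`; the generator `T` is `FreeAlgebra.ι k true` and the
generator `S` is `FreeAlgebra.ι k false`. -/
inductive HeckeRel (k : Type) [Field k] : FreeAlgebra k Bool → FreeAlgebra k Bool → Prop
  | Tsq : HeckeRel k (FreeAlgebra.ι k true * FreeAlgebra.ι k true) 1
  | Ssq : HeckeRel k ((FreeAlgebra.ι k false + 1) * FreeAlgebra.ι k false) 0

/-- The `k`-algebra `ℋ = k⟨T,S⟩/(T² - 1, S² + S)`. -/
abbrev Hecke (k : Type) [Field k] : Type := RingQuot (HeckeRel k)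

/-- The generator `T` of `ℋ`. -/
noncomputable def HeckeT (k : Type) [Field k] : Hecke k :=
  RingQuot.mkAlgHom k (HeckeRel k) (FreeAlgebra.ι k true)

/-- The generator `S` of `ℋ`. -/
noncomputable def HeckeS (k : Type) [Field k] : Hecke k :=
  RingQuot.mkAlgHom k (HeckeRel k) (FreeAlgebra.ι k false)




section Aux
variable (k : Type) [Field k]

noncomputable def heckeLift {A : Type} [Ring A] [Algebra k A] (t s : A)
    (ht : t * t = 1) (hs : (s + 1) * s = 0) : Hecke k →ₐ[k] A :=
  RingQuot.liftAlgHom k ⟨FreeAlgebra.lift k (fun b => bif b then t else s), by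
    rintro x y (h | h) <;> simp [ht, hs]⟩

@[simp] lemma heckeLift_T {A : Type} [Ring A] [Algebra k A] (t s : A)
    (ht : t * t = 1) (hs : (s + 1) * s = 0) : heckeLift k t s ht hs (HeckeT k) = t := by
  simp [heckeLift, HeckeT, RingQuot.liftAlgHom_mkAlgHom_apply]

@[simp] lemma heckeLift_S {A : Type} [Ring A] [Algebra k A] (t s : A)
    (ht : t * t = 1) (hs : (s + 1) * s = 0) : heckeLift k t s ht hs (HeckeS k) = s := by
  simp [heckeLift, HeckeS, RingQuot.liftAlgHom_mkAlgHom_apply]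

lemma hecke_induction {P : Hecke k → Prop}
    (halg : ∀ r : k, P (algebraMap k (Hecke k) r))
    (hT : P (HeckeT k)) (hS : P (HeckeS k))
    (hmul : ∀ x y, P x → P y → P (x * y))
    (hadd : ∀ x y, P x → P y → P (x + y)) (h : Hecke k) : P h := by
  obtain ⟨x, rfl⟩ := RingQuot.mkAlgHom_surjective k (HeckeRel k) h
  induction x with
  | grade0 r => rw [AlgHom.commutes]; exact halg r
  | grade1 b => cases b with
    | false => exact hS
    | true => exact hT
  | mul a b ha hb => rw [map_mul]; exact hmul _ _ ha hb
  | add a b ha hb => rw [map_add]; exact hadd _ _ ha hb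

lemma hecke_smul_comm {N : Type} [AddCommGroup N] [Module (Hecke k) N] [Module k N]
    [IsScalarTower k (Hecke k) N] (c : k) (h : Hecke k) (n : N) :
    h • c • n = c • h • n := by
  rw [← algebraMap_smul (Hecke k) c n, ← mul_smul, ← Algebra.commutes, mul_smul,
    algebraMap_smul]

end Aux

section Char2
variable (k : Type) [Field k] [CharP k 2]

/-- The character `T ↦ 1`, `S ↦ 0` of `ℋ`. -/
noncomputable def heckeChi : Hecke k →ₐ[k] k :=
  heckeLift k 1 0 (by ring) (by ring)

@[simp] lemma heckeChi_T : heckeChi k (HeckeT k) = 1 := heckeLift_T k _ _ _ _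
@[simp] lemma heckeChi_S : heckeChi k (HeckeS k) = 0 := heckeLift_S k _ _ _ _

/-- The action of `T` on the extension `E = k³`. -/
def heckeTE : (k × k × k) →ₗ[k] (k × k × k) where
  toFun x := (x.1 + x.2.1, x.2.1, x.2.2)
  map_add' x y := by simp [Prod.ext_iff]; ring
  map_smul' c x := by simp [Prod.ext_iff, smul_add, mul_add]

/-- The action of `S` on the extension `E = k³`. -/
def heckeSE : (k × k × k) →ₗ[k] (k × k × k) where
  toFun x := (0, x.2.2, x.2.2)
  map_add' x y := by simp [Prod.ext_iff]
  map_smul' c x := by simp [Prod.ext_iff]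

lemma heckeTE_sq : heckeTE k * heckeTE k = 1 := by
  ext x <;> simp [heckeTE, Module.End.mul_apply, add_assoc, CharTwo.add_self_eq_zero]

lemma heckeSE_rel : (heckeSE k + 1) * heckeSE k = 0 := by
  ext x <;> simp [heckeSE, Module.End.mul_apply, CharTwo.add_self_eq_zero]

/-- The representation of `ℋ` on `E = k³`. -/
noncomputable def heckeRho : Hecke k →ₐ[k] Module.End k (k × k × k) :=
  heckeLift k (heckeTE k) (heckeSE k) (heckeTE_sq k) (heckeSE_rel k)

@[simp] lemma heckeRho_T : heckeRho k (HeckeT k) = heckeTE k := heckeLift_T k _ _ _ _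
@[simp] lemma heckeRho_S : heckeRho k (HeckeS k) = heckeSE k := heckeLift_S k _ _ _ _

/-- The `ℋ`-module structure on `E = k³`. -/
noncomputable def heckeModE : Module (Hecke k) (k × k × k) where
  smul h x := heckeRho k h x
  one_smul x := by
    show heckeRho k 1 x = x
    rw [map_one]; rfl
  mul_smul a b x := by
    show heckeRho k (a * b) x = heckeRho k a (heckeRho k b x)
    rw [map_mul]; rfl
  smul_zero a := map_zero _
  smul_add a x y := map_add _ _ _
  add_smul a b x := by
    show heckeRho k (a + b) x = heckeRho k a x + heckeRho k b x
    rw [map_add]; rfl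
  zero_smul x := by
    show heckeRho k 0 x = 0
    rw [map_zero]; rfl

attribute [local instance] heckeModE

lemma heckeModE_smul (h : Hecke k) (x : k × k × k) :
    h • x = heckeRho k h x := rfl

lemma heckeRho_e1 (h : Hecke k) : ∀ c : k, heckeRho k h (c, 0, 0) = (heckeChi k h * c, 0, 0) := by
  induction h using hecke_induction with
  | halg r =>
    intro c
    simp [Module.algebraMap_end_apply, Prod.ext_iff, smul_eq_mul]
  | hT => intro c; simp [heckeTE]
  | hS => intro c; simp [heckeSE]
  | hmul x y hx hy =>
    intro c
    rw [map_mul, Module.End.mul_apply, hy, hx, map_mul]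
    ring_nf
  | hadd x y hx hy =>
    intro c
    rw [map_add, LinearMap.add_apply, hx, hy, map_add]
    simp [Prod.ext_iff]; ring

end Char2

section Coeff
variable {k : Type} [Field k] {N : Type} [AddCommGroup N] [Module k N] {v : N}

noncomputable def uCoeff (hv : ∀ m : N, ∃! c : k, m = c • v) (m : N) : k := (hv m).choose

lemma uCoeff_spec (hv : ∀ m : N, ∃! c : k, m = c • v) (m : N) :
    m = uCoeff hv m • v := (hv m).choose_spec.1

lemma uCoeff_uniq (hv : ∀ m : N, ∃! c : k, m = c • v) {m : N} {c : k} (h : m = c • v) :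
    c = uCoeff hv m := (hv m).choose_spec.2 c h

end Coeff


/-- Let `k` be a field of characteristic `2` and `ℋ = k⟨T,S⟩/(T² - 1, S² + S)`.  Let `M₁` be
the (right) `ℋ`-module with basis `v` satisfying `vT = v`, `vS = 0`, and let `M_{Ind}` be
the `2`-dimensional `ℋ`-module with basis `v₁, v₂` satisfying `v₁T = v₁`, `v₂T = v₂`,
`v₁S = 0`, `v₂S = v₁ + v₂`.  Then `Ext¹_ℋ(M_{Ind}, M₁) ≠ 0`, i.e. there exists a non-split
extension of `M_{Ind}` by `M₁`. -/
theorem stmt_7 (k : Type) [Field k] [CharP k 2]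
    (M1 : Type) [AddCommGroup M1] [Module (Hecke k) M1] [Module k M1]
    [IsScalarTower k (Hecke k) M1]
    (v : M1) (hv : ∀ m : M1, ∃! c : k, m = c • v)
    (hvT : HeckeT k • v = v) (hvS : HeckeS k • v = 0)
    (MInd : Type) [AddCommGroup MInd] [Module (Hecke k) MInd] [Module k MInd]
    [IsScalarTower k (Hecke k) MInd]
    (v₁ v₂ : MInd) (hbasis : ∀ m : MInd, ∃! c : k × k, m = c.1 • v₁ + c.2 • v₂)
    (h1T : HeckeT k • v₁ = v₁) (h2T : HeckeT k • v₂ = v₂)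
    (h1S : HeckeS k • v₁ = 0) (h2S : HeckeS k • v₂ = v₁ + v₂) :
    ∃ (E : Type) (_ : AddCommGroup E) (_ : Module (Hecke k) E)
      (f : M1 →ₗ[Hecke k] E) (g : E →ₗ[Hecke k] MInd),
      Function.Injective f ∧ Function.Surjective g ∧
      LinearMap.range f = LinearMap.ker g ∧
      ¬∃ r : E →ₗ[Hecke k] M1, r.comp f = LinearMap.id := by
  classical
  letI : Module (Hecke k) (k × k × k) := heckeModE k
  -- v is nonzero
  have hv0 : v ≠ 0 := by
    intro h0
    obtain ⟨c, -, hu⟩ := hv v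
    have h1 := hu 1 (by simp)
    have h2 := hu 0 (by simp [h0])
    exact one_ne_zero (h1.trans h2.symm)
  -- every element of ℋ acts on M1 via the character χ
  have chiA : ∀ (h : Hecke k) (m : M1), h • m = heckeChi k h • m := by
    intro h
    induction h using hecke_induction with
    | halg r => intro m; simp [algebraMap_smul]
    | hT =>
      intro m
      obtain ⟨c, hc, -⟩ := hv m
      rw [hc, hecke_smul_comm, hvT, heckeChi_T, one_smul]
    | hS =>
      intro m
      obtain ⟨c, hc, -⟩ := hv m
      rw [hc, hecke_smul_comm, hvS, smul_zero, heckeChi_S, zero_smul]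
    | hmul x y hx hy =>
      intro m
      rw [mul_smul, hy, hecke_smul_comm, hx, map_mul, smul_smul]
      rw [mul_comm]
    | hadd x y hx hy =>
      intro m
      rw [add_smul, hx, hy, map_add, add_smul]
  -- the coefficient function on M1
  have co_hsmul : ∀ (h : Hecke k) (m : M1),
      uCoeff hv (h • m) = heckeChi k h * uCoeff hv m := by
    intro h m
    refine (uCoeff_uniq hv ?_).symm
    calc h • m = heckeChi k h • m := chiA h m
      _ = heckeChi k h • (uCoeff hv m • v) := by rw [← uCoeff_spec]
      _ = (heckeChi k h * uCoeff hv m) • v := by rw [mul_smul]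
  have co_add : ∀ m m' : M1, uCoeff hv (m + m') = uCoeff hv m + uCoeff hv m' := by
    intro m m'
    refine (uCoeff_uniq hv ?_).symm
    rw [add_smul, ← uCoeff_spec, ← uCoeff_spec]
  -- key computation for g-linearity
  have glin : ∀ (h : Hecke k) (x : k × k × k),
      (heckeRho k h x).2.1 • v₁ + (heckeRho k h x).2.2 • v₂
        = h • (x.2.1 • v₁ + x.2.2 • v₂) := by
    intro h
    induction h using hecke_induction with
    | halg r =>
      intro x
      rw [AlgHom.commutes, Module.algebraMap_end_apply, algebraMap_smul]
      simp [smul_add, smul_smul]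
    | hT =>
      intro x
      rw [heckeRho_T]
      have hTx : heckeTE k x = (x.1 + x.2.1, x.2.1, x.2.2) := rfl
      rw [hTx, smul_add, hecke_smul_comm, hecke_smul_comm, h1T, h2T]
    | hS =>
      intro x
      rw [heckeRho_S]
      have hSx : heckeSE k x = (0, x.2.2, x.2.2) := rfl
      rw [hSx, smul_add, hecke_smul_comm, hecke_smul_comm, h1S, h2S, smul_zero, zero_add,
        smul_add]
    | hmul x y hx hy =>
      intro z
      rw [map_mul, Module.End.mul_apply, hx, hy, mul_smul]
    | hadd x y hx hy =>
      intro z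
      rw [map_add, LinearMap.add_apply]
      simp only [Prod.fst_add, Prod.snd_add, add_smul]
      rw [← hx z, ← hy z]
      abel
  refine ⟨k × k × k, inferInstance, inferInstance,
    { toFun := fun m => (uCoeff hv m, 0, 0)
      map_add' := fun m m' => by simp [co_add, Prod.ext_iff]
      map_smul' := fun h m => by
        show (uCoeff hv (h • m), (0:k), (0:k)) = h • (uCoeff hv m, 0, 0)
        rw [co_hsmul, heckeModE_smul, heckeRho_e1] },
    { toFun := fun x => x.2.1 • v₁ + x.2.2 • v₂
      map_add' := fun x y => by
        simp only [Prod.fst_add, Prod.snd_add, add_smul]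
        abel
      map_smul' := fun h x => by
        show ((h • x).2.1) • v₁ + ((h • x).2.2) • v₂ = h • (x.2.1 • v₁ + x.2.2 • v₂)
        rw [heckeModE_smul]
        exact glin h x },
    ?_, ?_, ?_, ?_⟩
  · -- injective
    intro m m' h
    have h1 : uCoeff hv m = uCoeff hv m' := congrArg Prod.fst h
    rw [uCoeff_spec hv m, uCoeff_spec hv m', h1]
  · -- surjective
    intro m
    obtain ⟨⟨a, b⟩, hab, -⟩ := hbasis m
    exact ⟨(0, a, b), hab.symm⟩
  · -- exactness
    ext x
    simp only [LinearMap.mem_range, LinearMap.mem_ker, LinearMap.coe_mk, AddHom.coe_mk]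
    constructor
    · rintro ⟨m, rfl⟩
      show (0:k) • v₁ + (0:k) • v₂ = 0
      simp
    · intro hx
      obtain ⟨c0, -, hu⟩ := hbasis 0
      have h1 : (x.2.1, x.2.2) = c0 := hu _ hx.symm
      have h2 : ((0:k), (0:k)) = c0 := hu _ (by simp)
      have h3 : x.2.1 = 0 ∧ x.2.2 = 0 := by
        have := h1.trans h2.symm
        exact ⟨congrArg Prod.fst this, congrArg Prod.snd this⟩
      refine ⟨x.1 • v, ?_⟩
      have hc : uCoeff hv (x.1 • v) = x.1 := (uCoeff_uniq hv rfl).symm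
      show (uCoeff hv (x.1 • v), (0:k), (0:k)) = x
      rw [hc]
      exact Prod.ext rfl (Prod.ext h3.1.symm h3.2.symm)
  · -- no retraction
    rintro ⟨r, hr⟩
    have h10 : r ((1:k), 0, 0) = v := by
      have hfv := LinearMap.ext_iff.mp hr v
      have hcv : uCoeff hv v = 1 := (uCoeff_uniq hv (one_smul k v).symm).symm
      simpa [hcv] using hfv
    have hTe2 : HeckeT k • ((0:k), (1:k), (0:k)) = ((1:k), (1:k), (0:k)) := by
      rw [heckeModE_smul, heckeRho_T]
      show ((0:k) + 1, (1:k), (0:k)) = ((1:k), (1:k), (0:k))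
      norm_num
    have hsum : ((1:k), (1:k), (0:k)) = ((1:k), (0:k), (0:k)) + ((0:k), (1:k), (0:k)) := by
      norm_num [Prod.ext_iff]
    have key : r ((0:k), 1, 0) = v + r ((0:k), 1, 0) := by
      calc r ((0:k), 1, 0) = heckeChi k (HeckeT k) • r ((0:k), 1, 0) := by
            rw [heckeChi_T, one_smul]
        _ = HeckeT k • r ((0:k), 1, 0) := (chiA _ _).symm
        _ = r (HeckeT k • ((0:k), 1, 0)) := (r.map_smul _ _).symm
        _ = r (((1:k), (0:k), (0:k)) + ((0:k), (1:k), (0:k))) := by rw [hTe2, hsum]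
        _ = v + r ((0:k), 1, 0) := by rw [map_add, h10]
    exact hv0 (right_eq_add.mp key)
end

section
/- Let \mathfrak{C} be an abelian category, \mathfrak{T} a thick (Serre) subcategory, and \mathfrak{D} = \mathfrak{C}/\mathfrak{T} the quotient category with quotient functor T. If P is a projective object of \mathfrak{C} such that Hom_{\mathfrak{C}}(P, X) = 0 for every object X of \mathfrak{T}, then T(P) is projective in \mathfrak{D}, and for every object N of \mathfrak{C} the functor T induces an isomorphism Hom_{\mathfrak{C}}(P, N) \cong Hom_{\mathfrak{D}}(T P, T N). -/
open CategoryTheory Limits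


namespace Stmt9Aux

set_option linter.unusedSectionVars false

variable {C : Type*} [Category C] [Abelian C] {𝒯 : C → Prop}

section
variable (hsub : ∀ ⦃X Y : C⦄ (f : X ⟶ Y), Mono f → 𝒯 Y → 𝒯 X)

include hsub

lemma t_iso {X Y : C} (e : X ≅ Y) (h : 𝒯 Y) : 𝒯 X := hsub e.hom inferInstance h

lemma t_zero {X₀ : C} (h0 : 𝒯 X₀) {Z : C} (hZ : IsZero Z) : 𝒯 Z := by
  have : Mono (0 : Z ⟶ X₀) := ⟨fun g h _ => hZ.eq_of_tgt g h⟩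
  exact hsub (0 : Z ⟶ X₀) this h0

variable (hext : ∀ S : ShortComplex C, S.ShortExact → 𝒯 S.X₁ → 𝒯 S.X₃ → 𝒯 S.X₂)
include hext

lemma t_ker_comp {X Y Z : C} (f : X ⟶ Y) (g : Y ⟶ Z)
    (hf : 𝒯 (kernel f)) (hg : 𝒯 (kernel g)) : 𝒯 (kernel (f ≫ g)) := by
  let v : kernel (f ≫ g) ⟶ kernel g :=
    kernel.lift g (kernel.ι (f ≫ g) ≫ f)
      (by rw [Category.assoc]; exact kernel.condition _)
  have hv : v ≫ kernel.ι g = kernel.ι (f ≫ g) ≫ f := kernel.lift_ι _ _ _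
  have h2 : kernel.ι (factorThruImage v) ≫ v = 0 := by
    have h := kernel.condition_assoc (factorThruImage v) (image.ι v)
    rw [image.fac, zero_comp] at h
    exact h
  have hw0 : (kernel.ι (factorThruImage v) ≫ kernel.ι (f ≫ g)) ≫ f = 0 := by
    rw [Category.assoc, ← hv, ← Category.assoc, h2, zero_comp]
  let w : kernel (factorThruImage v) ⟶ kernel f :=
    kernel.lift f (kernel.ι (factorThruImage v) ≫ kernel.ι (f ≫ g)) hw0
  have hwm : Mono w := by
    have : Mono (w ≫ kernel.ι f) := by
      rw [kernel.lift_ι]; exact mono_comp _ _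
    exact mono_of_mono w (kernel.ι f)
  have hKe : 𝒯 (kernel (factorThruImage v)) := hsub w hwm hf
  have hIv : 𝒯 (image v) := hsub (image.ι v) inferInstance hg
  let S : ShortComplex C := ShortComplex.mk (kernel.ι (factorThruImage v))
    (factorThruImage v) (kernel.condition _)
  have hSE : S.ShortExact :=
    { exact := S.exact_of_f_is_kernel (kernelIsKernel _) }
  exact hext S hSE hKe hIv

end

section
variable (hquot : ∀ ⦃X Y : C⦄ (f : X ⟶ Y), Epi f → 𝒯 X → 𝒯 Y)
  (hext : ∀ S : ShortComplex C, S.ShortExact → 𝒯 S.X₁ → 𝒯 S.X₃ → 𝒯 S.X₂)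
include hquot hext

lemma t_coker_comp {X Y Z : C} (f : X ⟶ Y) (g : Y ⟶ Z)
    (hf : 𝒯 (cokernel f)) (hg : 𝒯 (cokernel g)) : 𝒯 (cokernel (f ≫ g)) := by
  let v : cokernel f ⟶ cokernel (f ≫ g) :=
    cokernel.desc f (g ≫ cokernel.π (f ≫ g))
      (by rw [← Category.assoc, cokernel.condition])
  have hv : cokernel.π f ≫ v = g ≫ cokernel.π (f ≫ g) := cokernel.π_desc _ _ _
  have hIv : 𝒯 (image v) := hquot (factorThruImage v) inferInstance hf
  have h2 : g ≫ cokernel.π (f ≫ g) ≫ cokernel.π v = 0 := by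
    rw [← Category.assoc, ← hv, Category.assoc, cokernel.condition, comp_zero]
  let u' : cokernel g ⟶ cokernel v :=
    cokernel.desc g (cokernel.π (f ≫ g) ≫ cokernel.π v) h2
  have hu' : cokernel.π g ≫ u' = cokernel.π (f ≫ g) ≫ cokernel.π v :=
    cokernel.π_desc _ _ _
  have hue : Epi u' := by
    have : Epi (cokernel.π g ≫ u') := by rw [hu']; exact epi_comp _ _
    exact epi_of_epi (cokernel.π g) u'
  have hcv : 𝒯 (cokernel v) := hquot u' hue hg
  have hcm : 𝒯 (cokernel (image.ι v)) := by
    refine hquot ((cokernelIsoOfEq (image.fac v).symm).trans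
      (cokernelEpiComp (factorThruImage v) (image.ι v))).hom inferInstance hcv
  let S : ShortComplex C := ShortComplex.mk (image.ι v) (cokernel.π (image.ι v))
    (cokernel.condition _)
  have hSE : S.ShortExact :=
    { exact := S.exact_of_g_is_cokernel (cokernelIsCokernel _) }
  exact hext S hSE hIv hcm

end

open Abelian.Pseudoelement
attribute [local instance] Abelian.Pseudoelement.objectToSort Abelian.Pseudoelement.homToFun

lemma pseudo_id_apply {Y : C} (y : Y) : (𝟙 Y) y = y :=
  Quotient.inductionOn y fun a => by
    rw [pseudoApply_mk']
    exact Quotient.sound ⟨a.left, 𝟙 _, 𝟙 _, inferInstance, inferInstance, by simp⟩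

section
variable (hsub : ∀ ⦃X Y : C⦄ (f : X ⟶ Y), Mono f → 𝒯 Y → 𝒯 X)
  (hquot : ∀ ⦃X Y : C⦄ (f : X ⟶ Y), Epi f → 𝒯 X → 𝒯 Y)
include hsub hquot

/-- The left Ore condition construction for a Serre class. -/
lemma ore {X' X Y : C} (s : X' ⟶ X) (f : X' ⟶ Y)
    (hks : 𝒯 (kernel s)) (hcs : 𝒯 (cokernel s)) :
    ∃ (Z : C) (f' : X ⟶ Z) (t : Y ⟶ Z),
      𝒯 (kernel t) ∧ 𝒯 (cokernel t) ∧ f ≫ t = s ≫ f' := by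
  set u : X' ⟶ X ⊞ Y := biprod.lift (-s) f with hu
  have hsq : f ≫ (biprod.inr ≫ cokernel.π u) = s ≫ (biprod.inl ≫ cokernel.π u) := by
    have h : ((-s) ≫ biprod.inl + f ≫ biprod.inr) ≫ cokernel.π u = 0 := by
      have he : ((-s) ≫ biprod.inl + f ≫ biprod.inr : X' ⟶ X ⊞ Y) = u := by
        rw [hu, biprod.lift_eq]
      rw [he, cokernel.condition]
    rw [Preadditive.add_comp, Category.assoc, Category.assoc, Preadditive.neg_comp,
      neg_add_eq_zero] at h
    exact h.symm
  refine ⟨cokernel u, biprod.inl ≫ cokernel.π u, biprod.inr ≫ cokernel.π u, ?_, ?_, hsq⟩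
  · -- kernel part
    set t : Y ⟶ cokernel u := biprod.inr ≫ cokernel.π u with ht
    have hk0 : (kernel.ι s ≫ f) ≫ t = 0 := by
      rw [Category.assoc, hsq, ← Category.assoc, kernel.condition, zero_comp]
    let k : kernel s ⟶ kernel t := kernel.lift t (kernel.ι s ≫ f) hk0
    have hkepi : Epi k := by
      apply epi_of_pseudo_surjective
      intro b
      have hb : (cokernel.π u) ((biprod.inr : Y ⟶ X ⊞ Y) ((kernel.ι t) b)) = 0 := by
        simp only [← Abelian.Pseudoelement.comp_apply]
        rw [Category.assoc, ← ht, kernel.condition, Abelian.Pseudoelement.zero_apply]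
      let S₀ : ShortComplex C := ShortComplex.mk u (cokernel.π u) (cokernel.condition u)
      have hS₀ : S₀.Exact := S₀.exact_of_g_is_cokernel (cokernelIsCokernel u)
      obtain ⟨a, ha⟩ := pseudo_exact_of_exact hS₀ _ hb
      have ha' : (u : X' ⟶ X ⊞ Y) a = (biprod.inr : Y ⟶ X ⊞ Y) ((kernel.ι t) b) := ha
      have hu2 : u ≫ (biprod.fst : X ⊞ Y ⟶ X) = -s := by rw [hu]; simp
      have hu3 : u ≫ (biprod.snd : X ⊞ Y ⟶ Y) = f := by rw [hu]; simp
      have hfst : ((-s) : X' ⟶ X) a = 0 := by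
        have h1 := congrArg (pseudoApply (biprod.fst : X ⊞ Y ⟶ X)) ha'
        simp only [← Abelian.Pseudoelement.comp_apply] at h1
        rw [hu2, Category.assoc, biprod.inr_fst, comp_zero, Abelian.Pseudoelement.zero_apply] at h1
        exact h1
      haveI hIso : IsIso (-𝟙 X) := ⟨⟨-𝟙 X, by simp, by simp⟩⟩
      haveI hMono : Mono (-𝟙 X) := by infer_instance
      have hsa : (s : X' ⟶ X) a = 0 := by
        have h4 : s ≫ (-𝟙 X) = -s := by simp
        rw [← h4, Abelian.Pseudoelement.comp_apply] at hfst
        apply pseudo_injective_of_mono (-𝟙 X)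
        rw [hfst, apply_zero]
      let S₁ : ShortComplex C := ShortComplex.mk (kernel.ι s) s (kernel.condition s)
      have hS₁ : S₁.Exact := S₁.exact_of_f_is_kernel (kernelIsKernel s)
      obtain ⟨a', ha₁⟩ := pseudo_exact_of_exact hS₁ _ hsa
      have ha'' : (kernel.ι s : kernel s ⟶ X') a' = a := ha₁
      refine ⟨a', ?_⟩
      apply pseudo_injective_of_mono (kernel.ι t)
      have h5 : (kernel.ι t) ((k : kernel s ⟶ kernel t) a') = (f : X' ⟶ Y) a := by
        rw [← Abelian.Pseudoelement.comp_apply]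
        have hlift : k ≫ kernel.ι t = kernel.ι s ≫ f := kernel.lift_ι _ _ _
        rw [hlift, Abelian.Pseudoelement.comp_apply, ha'']
      have h6 : (f : X' ⟶ Y) a = (kernel.ι t) b := by
        have h7 := congrArg (pseudoApply (biprod.snd : X ⊞ Y ⟶ Y)) ha'
        simp only [← Abelian.Pseudoelement.comp_apply] at h7
        rw [hu3, Category.assoc, biprod.inr_snd, Category.comp_id] at h7
        exact h7
      rw [h5, h6]
    exact hquot k hkepi hks
  · -- cokernel part
    set t : Y ⟶ cokernel u := biprod.inr ≫ cokernel.π u with ht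
    have hd0 : u ≫ biprod.desc (cokernel.π s) 0 = 0 := by
      rw [hu, biprod.lift_desc, Preadditive.neg_comp, cokernel.condition, comp_zero,
        neg_zero, zero_add]
    let d : cokernel u ⟶ cokernel s := cokernel.desc u (biprod.desc (cokernel.π s) 0) hd0
    have hdπ : cokernel.π u ≫ d = biprod.desc (cokernel.π s) 0 := cokernel.π_desc _ _ _
    have ha0 : t ≫ d = 0 := by
      rw [ht, Category.assoc, hdπ, biprod.inr_desc]
    let amap : cokernel t ⟶ cokernel s := cokernel.desc t d ha0
    have h1 : cokernel.π t ≫ amap = d := cokernel.π_desc _ _ _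
    have hb0 : s ≫ (biprod.inl ≫ cokernel.π u) ≫ cokernel.π t = 0 := by
      rw [← Category.assoc, ← hsq, Category.assoc, cokernel.condition, comp_zero]
    let bmap : cokernel s ⟶ cokernel t :=
      cokernel.desc s ((biprod.inl ≫ cokernel.π u) ≫ cokernel.π t) hb0
    have hbπ : cokernel.π s ≫ bmap = (biprod.inl ≫ cokernel.π u) ≫ cokernel.π t :=
      cokernel.π_desc _ _ _
    have hab : amap ≫ bmap = 𝟙 (cokernel t) := by
      rw [← cancel_epi (cokernel.π t), Category.comp_id, ← Category.assoc, h1]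
      rw [← cancel_epi (cokernel.π u)]
      apply biprod.hom_ext'
      · slice_lhs 2 3 => rw [hdπ]
        rw [biprod.inl_desc_assoc, hbπ, Category.assoc]
      · slice_lhs 2 3 => rw [hdπ]
        rw [biprod.inr_desc_assoc, zero_comp, ← Category.assoc, ← ht, cokernel.condition]
    have hba : bmap ≫ amap = 𝟙 (cokernel s) := by
      rw [← cancel_epi (cokernel.π s), Category.comp_id, ← Category.assoc, hbπ]
      rw [Category.assoc, h1, Category.assoc, hdπ, biprod.inl_desc]
    exact t_iso hsub ⟨amap, bmap, hab, hba⟩ hcs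

end
end Stmt9Aux

/-- Let `𝔠` be an abelian category, `𝔱` a thick (Serre) subcategory (given as a property of
objects closed under subobjects, quotients and extensions), and `𝔡 = 𝔠/𝔱` the quotient
category with quotient functor `T` (realized as the localization of `𝔠` at the class of
morphisms whose kernel and cokernel lie in `𝔱`).  If `P` is a projective object of `𝔠` such
that `Hom_𝔠(P, X) = 0` for every object `X` of `𝔱`, then `T(P)` is projective in `𝔡`, and
for every object `N` of `𝔠` the functor `T` induces an isomorphism
`Hom_𝔠(P, N) ≅ Hom_𝔡(T P, T N)`. -/
theorem stmt_9 {C : Type*} [Category C] [Abelian C]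
    (𝒯 : C → Prop)
    (hsub : ∀ ⦃X Y : C⦄ (f : X ⟶ Y), Mono f → 𝒯 Y → 𝒯 X)
    (hquot : ∀ ⦃X Y : C⦄ (f : X ⟶ Y), Epi f → 𝒯 X → 𝒯 Y)
    (hext : ∀ S : ShortComplex C, S.ShortExact → 𝒯 S.X₁ → 𝒯 S.X₃ → 𝒯 S.X₂)
    {D : Type*} [Category D]
    (T : C ⥤ D)
    (hT : T.IsLocalization
      (fun _ _ f => 𝒯 (kernel f) ∧ 𝒯 (cokernel f) : MorphismProperty C))
    (P : C) [Projective P] (hP : ∀ X : C, 𝒯 X → ∀ f : P ⟶ X, f = 0)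
    (N : C) :
    Projective (T.obj P) ∧ Function.Bijective (fun f : P ⟶ N => T.map f) := by
  let W : MorphismProperty C := fun _ _ f => 𝒯 (kernel f) ∧ 𝒯 (cokernel f)
  haveI : T.IsLocalization W := hT
  by_cases hex : ∃ X₀, 𝒯 X₀
  · -- main case : 𝒯 is nonempty, hence contains all zero objects
    obtain ⟨X₀, hX₀⟩ := hex
    have h0 : ∀ {Z : C}, IsZero Z → 𝒯 Z := fun hZ => Stmt9Aux.t_zero hsub hX₀ hZ
    haveI hMul : W.IsMultiplicative :=
      { id_mem := fun X => ⟨h0 ((isZero_zero C).of_iso (kernel.ofMono (𝟙 X))),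
          h0 ((isZero_zero C).of_iso (cokernel.ofEpi (𝟙 X)))⟩
        comp_mem := fun f g hf hg => ⟨Stmt9Aux.t_ker_comp hsub hext f g hf.1 hg.1,
          Stmt9Aux.t_coker_comp hquot hext f g hf.2 hg.2⟩ }
    haveI hcal : W.HasLeftCalculusOfFractions :=
      { exists_leftFraction := fun X Y φ => by
          obtain ⟨Z, f', t, hk, hc, hsq⟩ := Stmt9Aux.ore hsub hquot φ.s φ.f φ.hs.1 φ.hs.2
          exact ⟨⟨f', t, ⟨hk, hc⟩⟩, hsq⟩
        ext := fun X' X Y f₁ f₂ s hs hfs => by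
          have h1 : s ≫ (f₁ - f₂) = 0 := by rw [Preadditive.comp_sub, hfs, sub_self]
          have hh : cokernel.π s ≫ cokernel.desc s (f₁ - f₂) h1 = f₁ - f₂ :=
            cokernel.π_desc _ _ _
          refine ⟨cokernel (cokernel.desc s (f₁ - f₂) h1),
            cokernel.π (cokernel.desc s (f₁ - f₂) h1), ⟨?_, ?_⟩, ?_⟩
          · exact hquot (Abelian.factorThruImage (cokernel.desc s (f₁ - f₂) h1))
              inferInstance hs.2
          · exact h0 ((isZero_zero C).of_iso (cokernel.ofEpi _))
          · have h2 : (f₁ - f₂) ≫ cokernel.π (cokernel.desc s (f₁ - f₂) h1) = 0 := by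
              calc (f₁ - f₂) ≫ cokernel.π (cokernel.desc s (f₁ - f₂) h1)
                  = (cokernel.π s ≫ cokernel.desc s (f₁ - f₂) h1) ≫
                      cokernel.π (cokernel.desc s (f₁ - f₂) h1) := by rw [hh]
                _ = 0 := by rw [Category.assoc, cokernel.condition, comp_zero]
            rw [Preadditive.sub_comp, sub_eq_zero] at h2
            exact h2 }
    have hsurj : ∀ (M : C) (g : T.obj P ⟶ T.obj M), ∃ m : P ⟶ M, T.map m = g := by
      intro M g
      obtain ⟨φ, hφ⟩ := Localization.exists_leftFraction T W g
      have h1 : φ.f ≫ cokernel.π φ.s = 0 := hP _ φ.hs.2 _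
      obtain ⟨d, hd⟩ := Projective.factors (kernel.lift (cokernel.π φ.s) φ.f h1)
        (Abelian.factorThruImage φ.s)
      have h2 : d ≫ φ.s = φ.f := by
        have h3 : d ≫ Abelian.factorThruImage φ.s ≫ Abelian.image.ι φ.s = φ.f := by
          rw [← Category.assoc, hd]; exact kernel.lift_ι _ _ _
        rwa [Abelian.image.fac φ.s] at h3
      refine ⟨d, ?_⟩
      haveI h4 : IsIso (T.map φ.s) := Localization.inverts T W φ.s φ.hs
      rw [hφ, ← cancel_mono (T.map φ.s),
        MorphismProperty.LeftFraction.map_comp_map_s, ← T.map_comp, h2]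
    have hinj : ∀ (M : C) (f₁ f₂ : P ⟶ M), T.map f₁ = T.map f₂ → f₁ = f₂ := by
      intro M f₁ f₂ hmap
      obtain ⟨Z, sz, hsz, hfs⟩ := (MorphismProperty.map_eq_iff_postcomp T W f₁ f₂).1 hmap
      have h1 : (f₁ - f₂) ≫ sz = 0 := by rw [Preadditive.sub_comp, hfs, sub_self]
      have h2 : kernel.lift sz (f₁ - f₂) h1 = 0 := hP _ hsz.1 _
      have h3 : f₁ - f₂ = 0 := by
        rw [← kernel.lift_ι sz (f₁ - f₂) h1, h2, zero_comp]
      exact sub_eq_zero.1 h3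
    refine ⟨?_, fun a b h => hinj N a b h, hsurj N⟩
    constructor
    intro E' X mf ge hge
    haveI : T.EssSurj := Localization.essSurj T W
    let α := T.objObjPreimageIso E'
    let β := T.objObjPreimageIso X
    let g' : T.obj (T.objPreimage E') ⟶ T.obj (T.objPreimage X) := α.hom ≫ ge ≫ β.inv
    haveI hge' : Epi g' := by
      haveI : Epi (ge ≫ β.inv) := epi_comp _ _
      exact epi_comp _ _
    obtain ⟨φ, hφ⟩ := Localization.exists_leftFraction T W g'
    haveI h3 : IsIso (T.map φ.s) := Localization.inverts T W φ.s φ.hs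
    haveI h4 : Epi (T.map φ.f) := by
      rw [← MorphismProperty.LeftFraction.map_comp_map_s φ T (Localization.inverts T W),
        ← hφ]
      exact epi_comp _ _
    have h5 : 𝒯 (cokernel φ.f) := by
      have e1 : T.map φ.f ≫ T.map (cokernel.π φ.f) =
          T.map φ.f ≫ T.map (0 : φ.Y' ⟶ cokernel φ.f) := by
        rw [← T.map_comp, ← T.map_comp, cokernel.condition, comp_zero]
      have e2 : T.map (cokernel.π φ.f) = T.map (0 : φ.Y' ⟶ cokernel φ.f) :=
        (cancel_epi (T.map φ.f)).1 e1
      obtain ⟨Z, tz, htz, htt⟩ := (MorphismProperty.map_eq_iff_postcomp T W _ _).1 e2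
      rw [zero_comp] at htt
      have ht0 : tz = 0 := by rw [← cancel_epi (cokernel.π φ.f), htt, comp_zero]
      rw [ht0] at htz
      exact hsub kernelZeroIsoSource.inv inferInstance htz.1
    obtain ⟨m, hm⟩ := hsurj (T.objPreimage X) (mf ≫ β.inv)
    have h6 : (m ≫ φ.s) ≫ cokernel.π φ.f = 0 := by
      have h6a : m ≫ φ.s ≫ cokernel.π φ.f = 0 := hP _ h5 _
      rw [Category.assoc]; exact h6a
    obtain ⟨d, hd⟩ := Projective.factors (kernel.lift (cokernel.π φ.f) (m ≫ φ.s) h6)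
      (Abelian.factorThruImage φ.f)
    have h7 : d ≫ φ.f = m ≫ φ.s := by
      have h7a : d ≫ Abelian.factorThruImage φ.f ≫ Abelian.image.ι φ.f = m ≫ φ.s := by
        rw [← Category.assoc, hd]; exact kernel.lift_ι _ _ _
      rwa [Abelian.image.fac φ.f] at h7a
    refine ⟨T.map d ≫ α.hom, ?_⟩
    have h8 : T.map d ≫ g' = T.map m := by
      rw [← cancel_mono (T.map φ.s), Category.assoc, hφ,
        MorphismProperty.LeftFraction.map_comp_map_s, ← T.map_comp, h7, T.map_comp]
    have h9 : α.hom ≫ ge = g' ≫ β.hom := by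
      show α.hom ≫ ge = (α.hom ≫ ge ≫ β.inv) ≫ β.hom
      rw [Category.assoc, Category.assoc, Iso.inv_hom_id, Category.comp_id]
    rw [Category.assoc, h9, ← Category.assoc, h8, hm, Category.assoc, Iso.inv_hom_id,
      Category.comp_id]
  · -- degenerate case : 𝒯 is empty, so T is an equivalence
    have hle : W ≤ MorphismProperty.isomorphisms C := fun X Y f hf =>
      absurd ⟨_, hf.1⟩ hex
    haveI : (𝟭 C).IsLocalization W := Functor.IsLocalization.of_isEquivalence _ _ hle
    have iso : T ⋙ (Localization.uniq T (𝟭 C) W).functor ≅ 𝟭 C :=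
      Localization.compUniqFunctor T (𝟭 C) W
    haveI : (T ⋙ (Localization.uniq T (𝟭 C) W).functor).IsEquivalence :=
      Functor.isEquivalence_of_iso iso.symm
    haveI : T.IsEquivalence :=
      Functor.isEquivalence_of_comp_right T (Localization.uniq T (𝟭 C) W).functor
    refine ⟨?_, fun a b h => T.map_injective h, fun g => ⟨T.preimage g, T.map_preimage g⟩⟩
    constructor
    intro E' X mf ge hge
    let α := T.objObjPreimageIso E'
    let β := T.objObjPreimageIso X
    let g₀ := T.preimage (α.hom ≫ ge ≫ β.inv)
    have hg₀ : T.map g₀ = α.hom ≫ ge ≫ β.inv := T.map_preimage _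
    haveI : Epi (T.map g₀) := by
      rw [hg₀]
      haveI : Epi (ge ≫ β.inv) := epi_comp _ _
      exact epi_comp _ _
    haveI : Epi g₀ := T.epi_of_epi_map inferInstance
    obtain ⟨d, hd⟩ := Projective.factors (T.preimage (mf ≫ β.inv)) g₀
    refine ⟨T.map d ≫ α.hom, ?_⟩
    have h9 : α.hom ≫ ge = T.map g₀ ≫ β.hom := by
      rw [hg₀, Category.assoc, Category.assoc, Iso.inv_hom_id, Category.comp_id]
    rw [Category.assoc, h9, ← Category.assoc, ← T.map_comp, hd, T.map_preimage,
      Category.assoc, Iso.inv_hom_id, Category.comp_id]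
end

section
/- Let K' be the subgroup of GL_2(\mathbb{Z}_2) consisting of all products g = sz with s \in SL_2(\mathbb{Z}_2), s \equiv I mod 4, and z a scalar matrix with z \in 1 + 4\mathbb{Z}_2. Then the map g \mapsto (g \cdot (K' \cap Z), (\det g)^{-1}) is an isomorphism of topological groups K' \cong (K'/(K' \cap Z)) \times \Gamma, where Z is the center of GL_2(\mathbb{Q}_2) and \Gamma = (K' \cap Z)^2 = \{ z^2 : z \in K' \cap Z \}. -/
open Matrix NNReal

lemma aux_ne_neg (b b' : ℤ_[2]) : 1 + 4*b ≠ -(1 + 4*b') := by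
  intro h
  have h2 := congrArg (PadicInt.toZModPow 2) h
  rw [map_add, map_neg, map_add, _root_.map_mul, _root_.map_mul, _root_.map_one, map_ofNat] at h2
  have h4 : (4 : ZMod (2^2)) = 0 := by decide
  rw [h4, zero_mul, zero_mul] at h2
  simp only [add_zero] at h2
  exact absurd h2 (by decide)

lemma exists_sqrt_aux (t : ℤ_[2]) : ∃ b : ℤ_[2], b + 2*b^2 = t := by
  have hlip : LipschitzWith 2⁻¹ (fun b : ℤ_[2] => t - 2*b^2) := by
    apply LipschitzWith.of_dist_le_mul
    intro x y
    have h1 : (t - 2*x^2) - (t - 2*y^2) = 2*((y-x)*(y+x)) := by ring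
    rw [dist_eq_norm, dist_eq_norm, h1, norm_mul, norm_mul]
    have h2 : ‖(2:ℤ_[2])‖ = 2⁻¹ := by simpa using PadicInt.norm_p (p := 2)
    rw [h2]
    have h3 : ‖y - x‖ = ‖x - y‖ := norm_sub_rev y x
    have h4 : ‖y + x‖ ≤ 1 := PadicInt.norm_le_one _
    have h5 : (0:ℝ) ≤ 2⁻¹ * ‖x-y‖ := by positivity
    calc 2⁻¹ * (‖y-x‖ * ‖y+x‖) ≤ 2⁻¹ * (‖y-x‖ * 1) := by
          apply mul_le_mul_of_nonneg_left (mul_le_mul_of_nonneg_left h4 (norm_nonneg _)) (by norm_num)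
      _ = (2⁻¹ : ℝ≥0) * ‖x-y‖ := by rw [mul_one, h3]; norm_num
  have hC : ContractingWith 2⁻¹ (fun b : ℤ_[2] => t - 2*b^2) := ⟨by exact inv_lt_one_of_one_lt₀ one_lt_two, hlip⟩
  refine ⟨hC.fixedPoint _, ?_⟩
  have := hC.fixedPoint_isFixedPt
  unfold Function.IsFixedPt at this
  linear_combination -this

/-- `1 + 4ℤ₂` as a set. -/
def S4 : Set ℤ_[2] := {x | ‖x - 1‖ ≤ ((2:ℕ):ℝ)^(-(2:ℕ) : ℤ)}
/-- `1 + 8ℤ₂` as a set. -/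
def S8 : Set ℤ_[2] := {x | ‖x - 1‖ ≤ ((2:ℕ):ℝ)^(-(3:ℕ) : ℤ)}

lemma mem_S4 {x : ℤ_[2]} : x ∈ S4 ↔ ∃ b, x = 1 + 4*b := by
  rw [S4, Set.mem_setOf_eq, PadicInt.norm_le_pow_iff_mem_span_pow,
    Ideal.mem_span_singleton]
  constructor
  · rintro ⟨b, hb⟩; exact ⟨b, by linear_combination hb⟩
  · rintro ⟨b, hb⟩; exact ⟨b, by rw [hb]; ring⟩

lemma mem_S8 {x : ℤ_[2]} : x ∈ S8 ↔ ∃ b, x = 1 + 8*b := by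
  rw [S8, Set.mem_setOf_eq, PadicInt.norm_le_pow_iff_mem_span_pow,
    Ideal.mem_span_singleton]
  constructor
  · rintro ⟨b, hb⟩; exact ⟨b, by linear_combination hb⟩
  · rintro ⟨b, hb⟩; exact ⟨b, by rw [hb]; ring⟩

lemma isClosed_S4 : IsClosed S4 :=
  isClosed_le ((continuous_id.sub continuous_const).norm) continuous_const

lemma isClosed_S8 : IsClosed S8 :=
  isClosed_le ((continuous_id.sub continuous_const).norm) continuous_const

instance : CompactSpace S4 := isCompact_iff_compactSpace.mp (isClosed_S4.isCompact)

lemma sq_mem_S8 {x : ℤ_[2]} (hx : x ∈ S4) : x * x ∈ S8 := by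
  obtain ⟨b, rfl⟩ := mem_S4.mp hx
  exact mem_S8.mpr ⟨b + 2*b^2, by ring⟩

lemma S4_sq_inj {x y : ℤ_[2]} (hx : x ∈ S4) (hy : y ∈ S4) (h : x * x = y * y) : x = y := by
  obtain ⟨b, rfl⟩ := mem_S4.mp hx
  obtain ⟨b', rfl⟩ := mem_S4.mp hy
  have h0 : ((1 + 4*b) - (1 + 4*b')) * ((1 + 4*b) + (1 + 4*b')) = 0 := by linear_combination h
  rcases mul_eq_zero.mp h0 with h1 | h1
  · linear_combination h1
  · exact absurd (by linear_combination h1) (aux_ne_neg b b')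

/-- Squaring as an equivalence `1+4ℤ₂ ≃ 1+8ℤ₂`. -/
noncomputable def sqEquiv : S4 ≃ S8 :=
  Equiv.ofBijective (fun x => ⟨x.1 * x.1, sq_mem_S8 x.2⟩)
    ⟨fun x y h => Subtype.ext (S4_sq_inj x.2 y.2 (congrArg Subtype.val h)),
     by
      rintro ⟨y, hy⟩
      obtain ⟨t, rfl⟩ := mem_S8.mp hy
      obtain ⟨b, hb⟩ := exists_sqrt_aux t
      exact ⟨⟨1 + 4*b, mem_S4.mpr ⟨b, rfl⟩⟩, Subtype.ext (by push_cast; linear_combination 8*hb)⟩⟩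

lemma continuous_sqEquiv : Continuous sqEquiv :=
  (continuous_subtype_val.mul continuous_subtype_val).subtype_mk _

/-- The square root homeomorphism `1+8ℤ₂ → 1+4ℤ₂`. -/
noncomputable def sqrtS : S8 → S4 :=
  (continuous_sqEquiv.homeoOfEquivCompactToT2 (f := sqEquiv)).symm

lemma continuous_sqrtS : Continuous sqrtS :=
  (continuous_sqEquiv.homeoOfEquivCompactToT2 (f := sqEquiv)).symm.continuous

lemma sqrtS_mul_self (y : S8) : (sqrtS y : ℤ_[2]) * (sqrtS y : ℤ_[2]) = y := by
  have := (continuous_sqEquiv.homeoOfEquivCompactToT2 (f := sqEquiv)).apply_symm_apply y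
  exact congrArg Subtype.val this

lemma sqrtS_mem (y : S8) : (sqrtS y : ℤ_[2]) ∈ S4 := (sqrtS y).2

lemma sqrtS_unique {c : ℤ_[2]} (hc : c ∈ S4) (y : S8) (h : c * c = y) :
    (sqrtS y : ℤ_[2]) = c :=
  S4_sq_inj (sqrtS_mem y) hc (by rw [sqrtS_mul_self y, h])

/-- The subgroup `K'` of `GL₂(ℤ₂)` consisting of all products `g = s·z` with
`s ∈ SL₂(ℤ₂)`, `s ≡ I mod 4`, and `z` a scalar matrix with scalar in `1 + 4ℤ₂`. -/
def Kprime : Subgroup (GL (Fin 2) ℤ_[2]) where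
  carrier := {g | ∃ s z : GL (Fin 2) ℤ_[2],
    g = s * z ∧
    Matrix.det (s : Matrix (Fin 2) (Fin 2) ℤ_[2]) = 1 ∧
    (∃ a : Matrix (Fin 2) (Fin 2) ℤ_[2],
      (s : Matrix (Fin 2) (Fin 2) ℤ_[2]) = 1 + 4 * a) ∧
    (∃ c : ℤ_[2], (z : Matrix (Fin 2) (Fin 2) ℤ_[2]) = c • (1 : Matrix (Fin 2) (Fin 2) ℤ_[2])
      ∧ ∃ b : ℤ_[2], c = 1 + 4 * b)}
  one_mem' := ⟨1, 1, by simp, by simp, ⟨0, by simp⟩, ⟨1, by simp, 0, by ring⟩⟩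
  mul_mem' := by
    rintro g₁ g₂ ⟨s₁, z₁, rfl, hd₁, ⟨a₁, ha₁⟩, ⟨c₁, hc₁, b₁, hb₁⟩⟩
      ⟨s₂, z₂, rfl, hd₂, ⟨a₂, ha₂⟩, ⟨c₂, hc₂, b₂, hb₂⟩⟩
    have hcomm : z₁ * s₂ = s₂ * z₁ := by
      ext
      rw [Units.val_mul, Units.val_mul, hc₁, smul_mul_assoc, mul_smul_comm, one_mul, mul_one]
    refine ⟨s₁ * s₂, z₁ * z₂, ?_, ?_, ⟨a₁ + a₂ + 4 * (a₁ * a₂), ?_⟩,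
      ⟨c₁ * c₂, ?_, b₁ + b₂ + 4 * (b₁ * b₂), by rw [hb₁, hb₂]; ring⟩⟩
    · rw [mul_assoc s₁ z₁ (s₂ * z₂), ← mul_assoc z₁ s₂ z₂, hcomm, mul_assoc s₂ z₁ z₂,
        ← mul_assoc s₁ s₂ (z₁ * z₂)]
    · rw [Units.val_mul, Matrix.det_mul, hd₁, hd₂, one_mul]
    · rw [Units.val_mul, ha₁, ha₂]; noncomm_ring
    · rw [Units.val_mul, hc₁, hc₂, smul_mul_assoc, mul_smul_comm, one_mul, smul_smul]
  inv_mem' := by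
    rintro g ⟨s, z, rfl, hd, ⟨a, ha⟩, ⟨c, hc, b, hb⟩⟩
    have hzz : ((z : Matrix (Fin 2) (Fin 2) ℤ_[2])) *
        ((z⁻¹ : GL (Fin 2) ℤ_[2]) : Matrix (Fin 2) (Fin 2) ℤ_[2]) = 1 := by
      rw [← Units.val_mul, mul_inv_cancel, Units.val_one]
    have hsmul : c • ((z⁻¹ : GL (Fin 2) ℤ_[2]) : Matrix (Fin 2) (Fin 2) ℤ_[2]) =
        (1 : Matrix (Fin 2) (Fin 2) ℤ_[2]) := by
      calc c • ((z⁻¹ : GL (Fin 2) ℤ_[2]) : Matrix (Fin 2) (Fin 2) ℤ_[2])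
          = (c • (1 : Matrix (Fin 2) (Fin 2) ℤ_[2])) *
            ((z⁻¹ : GL (Fin 2) ℤ_[2]) : Matrix (Fin 2) (Fin 2) ℤ_[2]) := by
            rw [smul_mul_assoc, one_mul]
        _ = ((z : Matrix (Fin 2) (Fin 2) ℤ_[2])) *
            ((z⁻¹ : GL (Fin 2) ℤ_[2]) : Matrix (Fin 2) (Fin 2) ℤ_[2]) := by rw [← hc]
        _ = 1 := hzz
    set d : ℤ_[2] := ((z⁻¹ : GL (Fin 2) ℤ_[2]) : Matrix (Fin 2) (Fin 2) ℤ_[2]) 0 0 with hdd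
    have hcd : c * d = 1 := by
      have h00 := congrFun (congrFun hsmul 0) 0
      rw [hdd]
      simpa [Matrix.one_apply, smul_eq_mul] using h00
    have hzinv : ((z⁻¹ : GL (Fin 2) ℤ_[2]) : Matrix (Fin 2) (Fin 2) ℤ_[2]) =
        d • (1 : Matrix (Fin 2) (Fin 2) ℤ_[2]) := by
      have h1 : d • (c • ((z⁻¹ : GL (Fin 2) ℤ_[2]) : Matrix (Fin 2) (Fin 2) ℤ_[2])) =
          d • (1 : Matrix (Fin 2) (Fin 2) ℤ_[2]) := by rw [hsmul]
      rwa [smul_smul, mul_comm d c, hcd, one_smul] at h1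
    have hsinv : ((s⁻¹ : GL (Fin 2) ℤ_[2]) : Matrix (Fin 2) (Fin 2) ℤ_[2]) =
        1 + 4 * (-(a * ((s⁻¹ : GL (Fin 2) ℤ_[2]) : Matrix (Fin 2) (Fin 2) ℤ_[2]))) := by
      have h : ((s : Matrix (Fin 2) (Fin 2) ℤ_[2])) *
          ((s⁻¹ : GL (Fin 2) ℤ_[2]) : Matrix (Fin 2) (Fin 2) ℤ_[2]) = 1 := by
        rw [← Units.val_mul, mul_inv_cancel, Units.val_one]
      rw [ha] at h
      set t := ((s⁻¹ : GL (Fin 2) ℤ_[2]) : Matrix (Fin 2) (Fin 2) ℤ_[2]) with ht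
      have key : t + 4 * (a * t) = 1 := by
        calc t + 4 * (a * t) = (1 + 4 * a) * t := by noncomm_ring
          _ = 1 := h
      rw [← key]; noncomm_ring
    have hdetinv : Matrix.det ((s⁻¹ : GL (Fin 2) ℤ_[2]) : Matrix (Fin 2) (Fin 2) ℤ_[2]) = 1 := by
      have h : ((s : Matrix (Fin 2) (Fin 2) ℤ_[2])) *
          ((s⁻¹ : GL (Fin 2) ℤ_[2]) : Matrix (Fin 2) (Fin 2) ℤ_[2]) = 1 := by
        rw [← Units.val_mul, mul_inv_cancel, Units.val_one]
      have h3 := congrArg Matrix.det h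
      rw [Matrix.det_mul, hd, one_mul, Matrix.det_one] at h3
      exact h3
    have hcomm' : z⁻¹ * s⁻¹ = s⁻¹ * z⁻¹ := by
      ext
      rw [Units.val_mul, Units.val_mul, hzinv, smul_mul_assoc, mul_smul_comm, one_mul, mul_one]
    refine ⟨s⁻¹, z⁻¹, ?_, hdetinv,
      ⟨-(a * ((s⁻¹ : GL (Fin 2) ℤ_[2]) : Matrix (Fin 2) (Fin 2) ℤ_[2])), hsinv⟩,
      ⟨d, hzinv, -(b * d), ?_⟩⟩
    · rw [_root_.mul_inv_rev, hcomm']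
    · have h4 : (1 + 4 * b) * d = 1 := by rw [← hb]; exact hcd
      linear_combination h4

/-- The intersection `K' ∩ Z` of `K'` with the center `Z` of `GL₂(ℚ₂)` (equivalently, with
the center of `GL₂(ℤ₂)`), as a subgroup of `K'`. -/
noncomputable def KprimeCenter : Subgroup Kprime :=
  (Subgroup.center (GL (Fin 2) ℤ_[2])).comap Kprime.subtype

instance : KprimeCenter.Normal := by
  constructor
  intro n hn g
  have hn' : (n : GL (Fin 2) ℤ_[2]) ∈ Subgroup.center (GL (Fin 2) ℤ_[2]) := hn
  have h : ((g * n * g⁻¹ : Kprime) : GL (Fin 2) ℤ_[2]) = (n : GL (Fin 2) ℤ_[2]) := by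
    push_cast
    rw [Subgroup.mem_center_iff.mp hn' (g : GL (Fin 2) ℤ_[2]), mul_assoc, mul_inv_cancel,
      mul_one]
  show ((g * n * g⁻¹ : Kprime) : GL (Fin 2) ℤ_[2]) ∈ Subgroup.center (GL (Fin 2) ℤ_[2])
  rw [h]; exact hn'

/-- The subgroup `Γ = (K' ∩ Z)² = { z² : z ∈ K' ∩ Z }` of `K'`. -/
def KprimeGamma : Subgroup Kprime where
  carrier := {x | ∃ z ∈ KprimeCenter, x = z * z}
  one_mem' := ⟨1, one_mem _, by simp⟩
  mul_mem' := by
    rintro x y ⟨z₁, hz₁, rfl⟩ ⟨z₂, hz₂, rfl⟩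
    refine ⟨z₁ * z₂, mul_mem hz₁ hz₂, ?_⟩
    have h₁ : (z₁ : GL (Fin 2) ℤ_[2]) ∈ Subgroup.center (GL (Fin 2) ℤ_[2]) := hz₁
    have hc : z₂ * z₁ = z₁ * z₂ := by
      apply Subtype.ext
      push_cast
      exact Subgroup.mem_center_iff.mp h₁ (z₂ : GL (Fin 2) ℤ_[2])
    have : z₁ * z₂ * (z₁ * z₂) = z₁ * z₁ * (z₂ * z₂) := by
      rw [mul_assoc z₁ z₂ (z₁ * z₂), ← mul_assoc z₂ z₁ z₂, hc, mul_assoc z₁ z₂ z₂,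
        ← mul_assoc z₁ z₁ (z₂ * z₂)]
    rw [this]
  inv_mem' := by
    rintro x ⟨z, hz, rfl⟩
    exact ⟨z⁻¹, inv_mem hz, by rw [_root_.mul_inv_rev]⟩


/-- Scalar element of `GL₂(ℤ₂)` built from an explicit pair of inverse scalars. -/
noncomputable def sUnit (c d : ℤ_[2]) (h : c * d = 1) : GL (Fin 2) ℤ_[2] :=
  ⟨c • 1, d • 1,
    by rw [smul_mul_assoc, one_mul, smul_smul, h, one_smul],
    by rw [smul_mul_assoc, one_mul, smul_smul, mul_comm, h, one_smul]⟩

lemma sUnit_val (c d : ℤ_[2]) (h : c * d = 1) :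
    (sUnit c d h : Matrix (Fin 2) (Fin 2) ℤ_[2]) = c • 1 := rfl

lemma sUnit_inv_val (c d : ℤ_[2]) (h : c * d = 1) :
    (((sUnit c d h)⁻¹ : GL (Fin 2) ℤ_[2]) : Matrix (Fin 2) (Fin 2) ℤ_[2]) = d • 1 := rfl

lemma sUnit_mem_center (c d : ℤ_[2]) (h : c * d = 1) :
    sUnit c d h ∈ Subgroup.center (GL (Fin 2) ℤ_[2]) := by
  rw [Subgroup.mem_center_iff]
  intro g
  ext
  rw [Units.val_mul, Units.val_mul, sUnit_val, smul_mul_assoc, mul_smul_comm, one_mul, mul_one]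

lemma sUnit_mem_Kprime (c d : ℤ_[2]) (h : c * d = 1) (hb : ∃ b, c = 1 + 4*b) :
    sUnit c d h ∈ Kprime :=
  ⟨1, sUnit c d h, (one_mul _).symm, by simp, ⟨0, by simp⟩, ⟨c, rfl, hb⟩⟩

lemma central_eq_smul_one {x : GL (Fin 2) ℤ_[2]}
    (hx : x ∈ Subgroup.center (GL (Fin 2) ℤ_[2])) :
    (x : Matrix (Fin 2) (Fin 2) ℤ_[2]) =
      ((x : Matrix (Fin 2) (Fin 2) ℤ_[2]) 0 0) • 1 := by
  have hu1 : (!![1,1;0,1] : Matrix (Fin 2) (Fin 2) ℤ_[2]) * !![1,-1;0,1] = 1 := by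
    ext i j; fin_cases i <;> fin_cases j <;>
      norm_num [Matrix.mul_apply, Fin.sum_univ_two, Matrix.one_apply]
  have hu1' : (!![1,-1;0,1] : Matrix (Fin 2) (Fin 2) ℤ_[2]) * !![1,1;0,1] = 1 := by
    ext i j; fin_cases i <;> fin_cases j <;>
      norm_num [Matrix.mul_apply, Fin.sum_univ_two, Matrix.one_apply]
  have hu2 : (!![1,0;1,1] : Matrix (Fin 2) (Fin 2) ℤ_[2]) * !![1,0;-1,1] = 1 := by
    ext i j; fin_cases i <;> fin_cases j <;>
      norm_num [Matrix.mul_apply, Fin.sum_univ_two, Matrix.one_apply]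
  have hu2' : (!![1,0;-1,1] : Matrix (Fin 2) (Fin 2) ℤ_[2]) * !![1,0;1,1] = 1 := by
    ext i j; fin_cases i <;> fin_cases j <;>
      norm_num [Matrix.mul_apply, Fin.sum_univ_two, Matrix.one_apply]
  have h1 := congrArg Units.val
    (Subgroup.mem_center_iff.mp hx ⟨!![1,1;0,1], !![1,-1;0,1], hu1, hu1'⟩)
  have h2 := congrArg Units.val
    (Subgroup.mem_center_iff.mp hx ⟨!![1,0;1,1], !![1,0;-1,1], hu2, hu2'⟩)
  rw [Units.val_mul, Units.val_mul] at h1 h2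
  have e10 : (x : Matrix (Fin 2) (Fin 2) ℤ_[2]) 1 0 = 0 := by
    have := congrFun (congrFun h1 0) 0
    simp [Matrix.mul_apply, Fin.sum_univ_two] at this
    linear_combination this
  have ediag : (x : Matrix (Fin 2) (Fin 2) ℤ_[2]) 1 1 =
      (x : Matrix (Fin 2) (Fin 2) ℤ_[2]) 0 0 := by
    have := congrFun (congrFun h1 0) 1
    simp [Matrix.mul_apply, Fin.sum_univ_two] at this
    linear_combination this
  have e01 : (x : Matrix (Fin 2) (Fin 2) ℤ_[2]) 0 1 = 0 := by
    have := congrFun (congrFun h2 0) 0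
    simp [Matrix.mul_apply, Fin.sum_univ_two] at this
    linear_combination this
  ext i j
  fin_cases i <;> fin_cases j <;>
    simp [Matrix.smul_apply, Matrix.one_apply, e10, ediag, e01]

lemma Kprime_struct {g : GL (Fin 2) ℤ_[2]} (hg : g ∈ Kprime) :
    ∃ c b : ℤ_[2], c = 1 + 4*b ∧
      Matrix.det (g : Matrix (Fin 2) (Fin 2) ℤ_[2]) = c * c ∧
      ∃ b0 : ℤ_[2], (g : Matrix (Fin 2) (Fin 2) ℤ_[2]) 0 0 = 1 + 4*b0 := by
  obtain ⟨s, z, rfl, hd, ⟨a, ha⟩, ⟨c, hc, b, hb⟩⟩ := hg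
  have hval : ((s * z : GL (Fin 2) ℤ_[2]) : Matrix (Fin 2) (Fin 2) ℤ_[2]) =
      c • (s : Matrix (Fin 2) (Fin 2) ℤ_[2]) := by
    rw [Units.val_mul, hc, mul_smul_comm, mul_one]
  refine ⟨c, b, hb, ?_, ?_⟩
  · rw [hval, Matrix.det_smul, hd]
    simp [Fintype.card_fin]
    ring
  · have hs00 : (s : Matrix (Fin 2) (Fin 2) ℤ_[2]) 0 0 = 1 + 4 * a 0 0 := by
      rw [ha, ← Matrix.diagonal_ofNat (n := Fin 2) (α := ℤ_[2]) (m := 4)]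
      simp [Matrix.add_apply, Matrix.mul_apply, Fin.sum_univ_two, Matrix.one_apply,
        Matrix.diagonal_apply]
    refine ⟨b + a 0 0 + 4 * (b * a 0 0), ?_⟩
    have : ((s * z : GL (Fin 2) ℤ_[2]) : Matrix (Fin 2) (Fin 2) ℤ_[2]) 0 0 =
        c * (s : Matrix (Fin 2) (Fin 2) ℤ_[2]) 0 0 := by rw [hval]; rfl
    rw [this, hs00, hb]; ring

lemma inv14 {x y : ℤ_[2]} (b : ℤ_[2]) (hx : x = 1 + 4*b) (h : x * y = 1) :
    ∃ b', y = 1 + 4*b' := by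
  subst hx; exact ⟨-(b*y), by linear_combination h⟩

lemma mul14 {x y : ℤ_[2]} (hx : ∃ b, x = 1 + 4*b) (hy : ∃ b, y = 1 + 4*b) :
    ∃ b, x*y = 1 + 4*b := by
  obtain ⟨b, rfl⟩ := hx; obtain ⟨b', rfl⟩ := hy
  exact ⟨b + b' + 4*(b*b'), by ring⟩

lemma smulone_mul (x y : ℤ_[2]) :
    (x • (1 : Matrix (Fin 2) (Fin 2) ℤ_[2])) * (y • 1) = (x*y) • 1 := by
  rw [smul_mul_assoc, one_mul, smul_smul]

lemma Gamma_struct {γ : Kprime} (hγ : γ ∈ KprimeGamma) :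
    ∃ c b : ℤ_[2], c = 1 + 4*b ∧
      ((γ : GL (Fin 2) ℤ_[2]) : Matrix (Fin 2) (Fin 2) ℤ_[2]) = (c*c) • 1 := by
  obtain ⟨z, hz, rfl⟩ := hγ
  have hzc : (z : GL (Fin 2) ℤ_[2]) ∈ Subgroup.center (GL (Fin 2) ℤ_[2]) := hz
  have hsc := central_eq_smul_one hzc
  obtain ⟨c, b, hcb, hdet, ⟨b0, h00⟩⟩ := Kprime_struct z.2
  refine ⟨1 + 4*b0, b0, rfl, ?_⟩
  have : ((z*z : Kprime) : GL (Fin 2) ℤ_[2]) =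
      (z : GL (Fin 2) ℤ_[2]) * (z : GL (Fin 2) ℤ_[2]) := rfl
  rw [this, Units.val_mul, hsc, h00, smulone_mul]

/-- `det` of an element of `K'`, as a unit. -/
noncomputable def DG (g : Kprime) : ℤ_[2]ˣ :=
  Matrix.GeneralLinearGroup.det ((g : GL (Fin 2) ℤ_[2]))

lemma DG_val (g : Kprime) :
    (DG g).val = Matrix.det ((g : GL (Fin 2) ℤ_[2]) : Matrix (Fin 2) (Fin 2) ℤ_[2]) := rfl

lemma phi_memK (g : Kprime) : sUnit (DG g).inv (DG g).val (DG g).inv_val ∈ Kprime := by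
  obtain ⟨c, b, hcb, hdet, _⟩ := Kprime_struct g.2
  apply sUnit_mem_Kprime
  have hx : (DG g).val = 1 + 4*(2*b + 4*(b*b)) := by rw [DG_val, hdet, hcb]; ring
  exact inv14 _ hx (DG g).val_inv

lemma phi_memGam (g : Kprime) :
    (⟨sUnit (DG g).inv (DG g).val (DG g).inv_val, phi_memK g⟩ : Kprime) ∈ KprimeGamma := by
  obtain ⟨c, b, hcb, hdet, _⟩ := Kprime_struct g.2
  have hdv : (DG g).val = c * c := hdet
  have h1 : (c * (DG g).inv) * c = 1 := by
    have h := (DG g).val_inv; rw [hdv] at h; linear_combination h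
  have hbb : ∃ b', c * (DG g).inv = 1 + 4*b' :=
    inv14 b hcb (by linear_combination h1)
  have hmemz : sUnit (c*(DG g).inv) c h1 ∈ Kprime := sUnit_mem_Kprime (c*(DG g).inv) c h1 hbb
  have hzc : (⟨sUnit (c*(DG g).inv) c h1, hmemz⟩ : Kprime) ∈ KprimeCenter :=
    Subgroup.mem_comap.mpr (sUnit_mem_center (c*(DG g).inv) c h1)
  have heq : (⟨sUnit (DG g).inv (DG g).val (DG g).inv_val, phi_memK g⟩ : Kprime) =
      (⟨sUnit (c*(DG g).inv) c h1, hmemz⟩ : Kprime) * ⟨sUnit (c*(DG g).inv) c h1, hmemz⟩ := by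
    apply Subtype.ext; apply Units.ext
    show (DG g).inv • (1 : Matrix (Fin 2) (Fin 2) ℤ_[2]) =
      ((c*(DG g).inv) • 1) * ((c*(DG g).inv) • 1)
    rw [smulone_mul]
    congr 1
    have h := (DG g).val_inv
    rw [hdv] at h
    linear_combination (-(DG g).inv) * h
  exact ⟨_, hzc, heq⟩

/-- The homomorphism `g ↦ (det g)⁻¹ · I` from `K'` to `Γ`. -/
noncomputable def phi : Kprime →* KprimeGamma where
  toFun g := ⟨⟨sUnit (DG g).inv (DG g).val (DG g).inv_val, phi_memK g⟩, phi_memGam g⟩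
  map_one' := by
    apply Subtype.ext; apply Subtype.ext; apply Units.ext
    show (DG 1).inv • (1 : Matrix (Fin 2) (Fin 2) ℤ_[2]) = (1 : Matrix (Fin 2) (Fin 2) ℤ_[2])
    have h1 : DG 1 = 1 := by
      apply Units.ext
      show Matrix.det (((1 : Kprime) : GL (Fin 2) ℤ_[2]) : Matrix (Fin 2) (Fin 2) ℤ_[2]) = 1
      simp
    rw [h1]
    simp
  map_mul' g h := by
    apply Subtype.ext; apply Subtype.ext; apply Units.ext
    show (DG (g*h)).inv • (1 : Matrix (Fin 2) (Fin 2) ℤ_[2]) =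
      ((DG g).inv • 1) * ((DG h).inv • 1)
    rw [smulone_mul]
    congr 1
    have hmul : DG (g*h) = DG g * DG h := by
      apply Units.ext
      show Matrix.det (((g*h : Kprime) : GL (Fin 2) ℤ_[2]) : Matrix (Fin 2) (Fin 2) ℤ_[2]) = _
      rw [show ((g*h : Kprime) : GL (Fin 2) ℤ_[2]) =
        (g : GL (Fin 2) ℤ_[2]) * (h : GL (Fin 2) ℤ_[2]) from rfl, Units.val_mul, Matrix.det_mul]
      rfl
    rw [hmul]
    show (DG h).inv * (DG g).inv = _
    exact mul_comm _ _

/-- The candidate isomorphism, as a homomorphism. -/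
noncomputable def eHom : Kprime →* (Kprime ⧸ KprimeCenter) × KprimeGamma :=
  (QuotientGroup.mk' KprimeCenter).prod phi

lemma eHom_injective : Function.Injective eHom := by
  rw [injective_iff_map_eq_one]
  intro g hg
  have h1 : QuotientGroup.mk' KprimeCenter g = 1 := congrArg Prod.fst hg
  have h2 : phi g = 1 := congrArg Prod.snd hg
  have hc : g ∈ KprimeCenter := (QuotientGroup.eq_one_iff g).mp h1
  have hcg : (g : GL (Fin 2) ℤ_[2]) ∈ Subgroup.center (GL (Fin 2) ℤ_[2]) :=
    Subgroup.mem_comap.mp hc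
  have hsc := central_eq_smul_one hcg
  obtain ⟨c, b, hcb, hdet, ⟨b0, h00⟩⟩ := Kprime_struct g.2
  have hiv := congrArg
    (fun x : KprimeGamma => (((x : Kprime) : GL (Fin 2) ℤ_[2]) : Matrix (Fin 2) (Fin 2) ℤ_[2])) h2
  have hiv' : (DG g).inv • (1 : Matrix (Fin 2) (Fin 2) ℤ_[2]) = 1 := hiv
  have hinv1 : (DG g).inv = 1 := by
    have h := congrFun (congrFun hiv' 0) 0
    simpa [Matrix.smul_apply, Matrix.one_apply] using h
  have hdet1 : (DG g).val = 1 := by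
    have h := (DG g).val_inv; rw [hinv1, mul_one] at h; exact h
  set d : ℤ_[2] := ((g : GL (Fin 2) ℤ_[2]) : Matrix (Fin 2) (Fin 2) ℤ_[2]) 0 0 with hd
  have hdd : d * d = 1 := by
    have h : Matrix.det ((g : GL (Fin 2) ℤ_[2]) : Matrix (Fin 2) (Fin 2) ℤ_[2]) = 1 := hdet1
    rw [hsc, Matrix.det_smul, Matrix.det_one] at h
    simp only [Fintype.card_fin, mul_one] at h
    linear_combination h
  have hd1 : d = 1 := by
    have h0 : (d - 1) * (d + 1) = 0 := by linear_combination hdd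
    rcases mul_eq_zero.mp h0 with h | h
    · linear_combination h
    · exfalso
      exact aux_ne_neg b0 0 (by rw [← h00]; push_cast; linear_combination h)
  apply Subtype.ext; apply Units.ext
  show ((g : GL (Fin 2) ℤ_[2]) : Matrix (Fin 2) (Fin 2) ℤ_[2]) = 1
  rw [hsc, hd1, one_smul]

lemma eHom_surjective : Function.Surjective eHom := by
  rintro ⟨q, γ⟩
  obtain ⟨g, rfl⟩ := QuotientGroup.mk'_surjective KprimeCenter q
  obtain ⟨c₀, b₀, hcb₀, hγ⟩ := Gamma_struct γ.2
  obtain ⟨c, b, hcb, hdet, _⟩ := Kprime_struct g.2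
  set I : ℤ_[2] := (DG g).inv with hI
  have ha : (c * I) * c = 1 := by
    have h := (DG g).val_inv
    rw [DG_val, hdet] at h
    linear_combination h
  set Y : ℤ_[2] :=
    ((((γ : Kprime) : GL (Fin 2) ℤ_[2])⁻¹ : GL (Fin 2) ℤ_[2]) : Matrix (Fin 2) (Fin 2) ℤ_[2]) 0 0
    with hY
  have hb : (c₀ * Y) * c₀ = 1 := by
    have hmi : ((γ : Kprime) : GL (Fin 2) ℤ_[2]).val *
        (((γ : Kprime) : GL (Fin 2) ℤ_[2])⁻¹ : GL (Fin 2) ℤ_[2]).val = 1 := by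
      rw [← Units.val_mul, mul_inv_cancel, Units.val_one]
    rw [hγ, smul_mul_assoc, one_mul] at hmi
    have h := congrFun (congrFun hmi 0) 0
    simp only [Matrix.smul_apply, smul_eq_mul, Matrix.one_apply_eq] at h
    linear_combination h
  set wv : ℤ_[2] := (c * I) * (c₀ * Y) with hwv
  set wi : ℤ_[2] := c * c₀ with hwi
  have hw : wv * wi = 1 := by
    have h : wv * wi = ((c*I)*c) * ((c₀*Y)*c₀) := by rw [hwv, hwi]; ring
    rw [h, ha, hb, one_mul]
  have hwmem : ∃ b', wv = 1 + 4*b' :=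
    mul14 (inv14 b hcb (by linear_combination ha)) (inv14 b₀ hcb₀ (by linear_combination hb))
  have hwK : sUnit wv wi hw ∈ Kprime := sUnit_mem_Kprime wv wi hw hwmem
  have hwC : (⟨sUnit wv wi hw, hwK⟩ : Kprime) ∈ KprimeCenter :=
    Subgroup.mem_comap.mpr (sUnit_mem_center wv wi hw)
  refine ⟨g * ⟨sUnit wv wi hw, hwK⟩, ?_⟩
  have hfst : QuotientGroup.mk' KprimeCenter (g * ⟨sUnit wv wi hw, hwK⟩) =
      QuotientGroup.mk' KprimeCenter g := by
    rw [_root_.map_mul]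
    have : QuotientGroup.mk' KprimeCenter (⟨sUnit wv wi hw, hwK⟩ : Kprime) = 1 :=
      (QuotientGroup.eq_one_iff _).mpr hwC
    rw [this, mul_one]
  have hval : (DG (g * ⟨sUnit wv wi hw, hwK⟩)).val = (c*c) * (wv*wv) := by
    have h : (DG (g * ⟨sUnit wv wi hw, hwK⟩)).val =
        Matrix.det (((g : GL (Fin 2) ℤ_[2]) : Matrix (Fin 2) (Fin 2) ℤ_[2]) * (wv • 1)) := rfl
    rw [h, Matrix.det_mul, hdet, Matrix.det_smul, Matrix.det_one]
    simp only [Fintype.card_fin, mul_one]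
    ring
  have hvc : (DG (g * ⟨sUnit wv wi hw, hwK⟩)).val * (c₀*c₀) = 1 := by
    rw [hval]
    have h : (c*c) * (wv*wv) * (c₀*c₀) = ((c*I)*c) * ((c*I)*c) * (((c₀*Y)*c₀) * ((c₀*Y)*c₀)) := by
      rw [hwv]; ring
    rw [h, ha, hb]; ring
  have hD : (DG (g * ⟨sUnit wv wi hw, hwK⟩)).inv = c₀*c₀ := by
    calc (DG (g * ⟨sUnit wv wi hw, hwK⟩)).inv
        = (DG (g * ⟨sUnit wv wi hw, hwK⟩)).inv *
          ((DG (g * ⟨sUnit wv wi hw, hwK⟩)).val * (c₀*c₀)) := by rw [hvc, mul_one]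
      _ = c₀*c₀ := by rw [← mul_assoc, (DG _).inv_val, one_mul]
  have hsnd : phi (g * ⟨sUnit wv wi hw, hwK⟩) = γ := by
    apply Subtype.ext; apply Subtype.ext; apply Units.ext
    show (DG (g * ⟨sUnit wv wi hw, hwK⟩)).inv • (1 : Matrix (Fin 2) (Fin 2) ℤ_[2]) = _
    rw [hD, hγ]
  exact Prod.ext hfst hsnd

lemma S8_mul {x y : ℤ_[2]} (hx : x ∈ S8) (hy : y ∈ S8) : x*y ∈ S8 := by
  obtain ⟨s, rfl⟩ := mem_S8.mp hx; obtain ⟨t, rfl⟩ := mem_S8.mp hy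
  exact mem_S8.mpr ⟨s + t + 8*(s*t), by ring⟩

lemma det_mem_S8 (g : Kprime) :
    Matrix.det ((g : GL (Fin 2) ℤ_[2]) : Matrix (Fin 2) (Fin 2) ℤ_[2]) ∈ S8 := by
  obtain ⟨c, b, hcb, hdet, _⟩ := Kprime_struct g.2
  exact mem_S8.mpr ⟨b + 2*b^2, by rw [hdet, hcb]; ring⟩

lemma gamma00 (γ : KprimeGamma) :
    ∃ c b : ℤ_[2], c = 1 + 4*b ∧
      (((γ : Kprime) : GL (Fin 2) ℤ_[2]) : Matrix (Fin 2) (Fin 2) ℤ_[2]) 0 0 = c*c ∧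
      (((γ : Kprime) : GL (Fin 2) ℤ_[2]) : Matrix (Fin 2) (Fin 2) ℤ_[2]) = (c*c) • 1 := by
  obtain ⟨c, b, hcb, hγ⟩ := Gamma_struct γ.2
  exact ⟨c, b, hcb, by rw [hγ, Matrix.smul_apply, Matrix.one_apply_eq, smul_eq_mul, mul_one], hγ⟩

lemma gamma00_mem_S8 (γ : KprimeGamma) :
    (((γ : Kprime) : GL (Fin 2) ℤ_[2]) : Matrix (Fin 2) (Fin 2) ℤ_[2]) 0 0 ∈ S8 := by
  obtain ⟨c, b, hcb, h00, _⟩ := gamma00 γ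
  exact mem_S8.mpr ⟨b + 2*b^2, by rw [h00, hcb]; ring⟩

lemma mem8_prod (p : Kprime × KprimeGamma) :
    Matrix.det ((p.1 : GL (Fin 2) ℤ_[2]) : Matrix (Fin 2) (Fin 2) ℤ_[2]) *
      (((p.2 : Kprime) : GL (Fin 2) ℤ_[2]) : Matrix (Fin 2) (Fin 2) ℤ_[2]) 0 0 ∈ S8 :=
  S8_mul (det_mem_S8 p.1) (gamma00_mem_S8 p.2)

/-- The scalar `√(det g · γ₀₀)` appearing in the inverse map. -/
noncomputable def Fm (p : Kprime × KprimeGamma) : ℤ_[2] :=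
  (sqrtS ⟨_, mem8_prod p⟩ : ℤ_[2])

/-- `(det g)⁻¹`. -/
noncomputable def FI (p : Kprime × KprimeGamma) : ℤ_[2] := (DG p.1).inv

/-- `(γ₀₀)⁻¹`, read off the inverse matrix of `γ`. -/
noncomputable def FY (p : Kprime × KprimeGamma) : ℤ_[2] :=
  ((((p.2 : Kprime) : GL (Fin 2) ℤ_[2])⁻¹ : GL (Fin 2) ℤ_[2]) :
    Matrix (Fin 2) (Fin 2) ℤ_[2]) 0 0

lemma FY_mul (p : Kprime × KprimeGamma) :
    (((p.2 : Kprime) : GL (Fin 2) ℤ_[2]) : Matrix (Fin 2) (Fin 2) ℤ_[2]) 0 0 * FY p = 1 := by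
  obtain ⟨c₀, b₀, hcb₀, h00, hγ⟩ := gamma00 p.2
  have hmi : ((p.2 : Kprime) : GL (Fin 2) ℤ_[2]).val *
      ((((p.2 : Kprime) : GL (Fin 2) ℤ_[2]))⁻¹ : GL (Fin 2) ℤ_[2]).val = 1 := by
    rw [← Units.val_mul, mul_inv_cancel, Units.val_one]
  rw [hγ, smul_mul_assoc, one_mul] at hmi
  have h := congrFun (congrFun hmi 0) 0
  simp only [Matrix.smul_apply, smul_eq_mul, Matrix.one_apply_eq] at h
  rw [h00]
  exact h

lemma Fm_sq (p : Kprime × KprimeGamma) :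
    Fm p * Fm p = Matrix.det ((p.1 : GL (Fin 2) ℤ_[2]) : Matrix (Fin 2) (Fin 2) ℤ_[2]) *
      (((p.2 : Kprime) : GL (Fin 2) ℤ_[2]) : Matrix (Fin 2) (Fin 2) ℤ_[2]) 0 0 :=
  sqrtS_mul_self ⟨_, mem8_prod p⟩

lemma Fw_mul (p : Kprime × KprimeGamma) : (Fm p * (FI p * FY p)) * Fm p = 1 := by
  have hdi : Matrix.det ((p.1 : GL (Fin 2) ℤ_[2]) : Matrix (Fin 2) (Fin 2) ℤ_[2]) * FI p = 1 :=
    (DG p.1).val_inv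
  have hgy := FY_mul p
  have hexp : (Fm p * (FI p * FY p)) * Fm p = (Fm p * Fm p) * FI p * FY p := by ring
  rw [hexp, Fm_sq]
  linear_combination ((((p.2 : Kprime) : GL (Fin 2) ℤ_[2]) :
    Matrix (Fin 2) (Fin 2) ℤ_[2]) 0 0 * FY p) * hdi + hgy

lemma Fw_mem (p : Kprime × KprimeGamma) : ∃ b, Fm p * (FI p * FY p) = 1 + 4*b := by
  obtain ⟨c, b, hcb, hdet, _⟩ := Kprime_struct p.1.2
  obtain ⟨c₀, b₀, hcb₀, h00, _⟩ := gamma00 p.2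
  have hFI : ∃ b', FI p = 1 + 4*b' := by
    refine inv14 (2*b + 4*(b*b)) ?_ (DG p.1).val_inv
    rw [DG_val, hdet, hcb]; ring
  have hFY : ∃ b', FY p = 1 + 4*b' := by
    refine inv14 (2*b₀ + 4*(b₀*b₀)) ?_ (FY_mul p)
    rw [h00, hcb₀]; ring
  exact mul14 (mem_S4.mp (sqrtS_mem ⟨_, mem8_prod p⟩)) (mul14 hFI hFY)

/-- The inverse map `K'/(K'∩Z) × Γ → K'`, precomposed with the quotient projection. -/
noncomputable def F (p : Kprime × KprimeGamma) : Kprime :=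
  ⟨(p.1 : GL (Fin 2) ℤ_[2]) * sUnit (Fm p * (FI p * FY p)) (Fm p) (Fw_mul p),
   mul_mem p.1.2 (sUnit_mem_Kprime (Fm p * (FI p * FY p)) (Fm p) (Fw_mul p) (Fw_mem p))⟩

lemma eHom_F (p : Kprime × KprimeGamma) :
    eHom (F p) = (QuotientGroup.mk p.1, p.2) := by
  obtain ⟨c₀, b₀, hcb₀, h00, hγ⟩ := gamma00 p.2
  have hFdef : F p = p.1 * ⟨sUnit (Fm p * (FI p * FY p)) (Fm p) (Fw_mul p),
      sUnit_mem_Kprime (Fm p * (FI p * FY p)) (Fm p) (Fw_mul p) (Fw_mem p)⟩ := rfl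
  have hwC : (⟨sUnit (Fm p * (FI p * FY p)) (Fm p) (Fw_mul p),
      sUnit_mem_Kprime (Fm p * (FI p * FY p)) (Fm p) (Fw_mul p) (Fw_mem p)⟩ : Kprime) ∈ KprimeCenter :=
    Subgroup.mem_comap.mpr (sUnit_mem_center (Fm p * (FI p * FY p)) (Fm p) (Fw_mul p))
  have hfst : QuotientGroup.mk' KprimeCenter (F p) = QuotientGroup.mk p.1 := by
    rw [hFdef, _root_.map_mul]
    have h1 : QuotientGroup.mk' KprimeCenter
        (⟨sUnit (Fm p * (FI p * FY p)) (Fm p) (Fw_mul p),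
          sUnit_mem_Kprime (Fm p * (FI p * FY p)) (Fm p) (Fw_mul p) (Fw_mem p)⟩ : Kprime) = 1 :=
      (QuotientGroup.eq_one_iff _).mpr hwC
    rw [h1, mul_one]; rfl
  have hval : (DG (F p)).val =
      Matrix.det ((p.1 : GL (Fin 2) ℤ_[2]) : Matrix (Fin 2) (Fin 2) ℤ_[2]) *
        ((Fm p * (FI p * FY p)) * (Fm p * (FI p * FY p))) := by
    have h : (DG (F p)).val =
        Matrix.det (((p.1 : GL (Fin 2) ℤ_[2]) : Matrix (Fin 2) (Fin 2) ℤ_[2]) *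
          ((Fm p * (FI p * FY p)) • 1)) := rfl
    rw [h, Matrix.det_mul, Matrix.det_smul, Matrix.det_one]
    simp only [Fintype.card_fin, mul_one]
    ring
  have hvc : (DG (F p)).val *
      ((((p.2 : Kprime) : GL (Fin 2) ℤ_[2]) : Matrix (Fin 2) (Fin 2) ℤ_[2]) 0 0) = 1 := by
    rw [hval]
    have hdi : Matrix.det ((p.1 : GL (Fin 2) ℤ_[2]) : Matrix (Fin 2) (Fin 2) ℤ_[2]) * FI p = 1 :=
      (DG p.1).val_inv
    have hgy := FY_mul p
    have hmm := Fm_sq p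
    set D := Matrix.det ((p.1 : GL (Fin 2) ℤ_[2]) : Matrix (Fin 2) (Fin 2) ℤ_[2])
    set G := (((p.2 : Kprime) : GL (Fin 2) ℤ_[2]) : Matrix (Fin 2) (Fin 2) ℤ_[2]) 0 0
    have e1 : D * ((Fm p * (FI p * FY p)) * (Fm p * (FI p * FY p))) * G =
        (Fm p * Fm p) * (D * (FI p * FI p) * (G * (FY p * FY p))) := by ring
    have e2 : (D * G) * (D * (FI p * FI p) * (G * (FY p * FY p))) =
        ((D * FI p) * (D * FI p)) * ((G * FY p) * (G * FY p)) := by ring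
    rw [e1, hmm, e2, hdi, hgy]
    norm_num
  have hD : (DG (F p)).inv =
      (((p.2 : Kprime) : GL (Fin 2) ℤ_[2]) : Matrix (Fin 2) (Fin 2) ℤ_[2]) 0 0 := by
    calc (DG (F p)).inv = (DG (F p)).inv * ((DG (F p)).val *
        ((((p.2 : Kprime) : GL (Fin 2) ℤ_[2]) : Matrix (Fin 2) (Fin 2) ℤ_[2]) 0 0)) := by
          rw [hvc, mul_one]
      _ = _ := by rw [← mul_assoc, (DG (F p)).inv_val, one_mul]
  have hsnd : phi (F p) = p.2 := by
    apply Subtype.ext; apply Subtype.ext; apply Units.ext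
    show (DG (F p)).inv • (1 : Matrix (Fin 2) (Fin 2) ℤ_[2]) = _
    rw [hD, h00, hγ]
  exact Prod.ext hfst hsnd

lemma phi_continuous : Continuous ⇑phi := by
  apply Continuous.subtype_mk
  apply Continuous.subtype_mk
  rw [Units.continuous_iff]
  constructor
  · exact ((Units.continuous_coe_inv.comp continuous_subtype_val).matrix_det).smul
      continuous_const
  · exact ((Units.continuous_val.comp continuous_subtype_val).matrix_det).smul continuous_const

lemma eHom_continuous : Continuous ⇑eHom :=
  Continuous.prodMk QuotientGroup.continuous_mk phi_continuous

lemma F_continuous : Continuous F := by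
  apply Continuous.subtype_mk
  have c1 : Continuous fun p : Kprime × KprimeGamma => ((p.1 : GL (Fin 2) ℤ_[2]) : GL (Fin 2) ℤ_[2]) :=
    continuous_subtype_val.comp continuous_fst
  have cγ : Continuous fun p : Kprime × KprimeGamma => ((p.2 : Kprime) : GL (Fin 2) ℤ_[2]) :=
    continuous_subtype_val.comp (continuous_subtype_val.comp continuous_snd)
  have cm : Continuous Fm := by
    refine continuous_subtype_val.comp (continuous_sqrtS.comp ?_)
    exact Continuous.subtype_mk (((Units.continuous_val.comp c1).matrix_det).mul
      ((Units.continuous_val.comp cγ).matrix_elem 0 0)) _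
  have cFI : Continuous FI := (Units.continuous_coe_inv.comp c1).matrix_det
  have cFY : Continuous FY := (Units.continuous_coe_inv.comp cγ).matrix_elem 0 0
  apply Continuous.mul c1
  rw [Units.continuous_iff]
  exact ⟨(cm.mul (cFI.mul cFY)).smul continuous_const, cm.smul continuous_const⟩

/-- Let `K'` be the subgroup of `GL₂(ℤ₂)` of all products `g = s·z` with `s ∈ SL₂(ℤ₂)`,
`s ≡ I mod 4`, and `z` scalar with scalar in `1 + 4ℤ₂`.  Then the map
`g ↦ (g·(K' ∩ Z), (det g)⁻¹)` is an isomorphism of topological groups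
`K' ≅ (K'/(K' ∩ Z)) × Γ`, where `Z` is the center of `GL₂(ℚ₂)` and `Γ = (K' ∩ Z)²`. -/
theorem stmt_13 :
    ∃ e : Kprime ≃* (Kprime ⧸ KprimeCenter) × KprimeGamma,
      Continuous e ∧ Continuous e.symm ∧
      ∀ g : Kprime, (e g).1 = QuotientGroup.mk g ∧
        ((((e g).2 : Kprime) : GL (Fin 2) ℤ_[2]) : Matrix (Fin 2) (Fin 2) ℤ_[2]) =
          (((Matrix.GeneralLinearGroup.det ((g : GL (Fin 2) ℤ_[2])))⁻¹ : ℤ_[2]ˣ) : ℤ_[2]) •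
            (1 : Matrix (Fin 2) (Fin 2) ℤ_[2]) := by
  have hbij : Function.Bijective ⇑eHom := ⟨eHom_injective, eHom_surjective⟩
  refine ⟨MulEquiv.ofBijective eHom hbij, eHom_continuous, ?_, fun g => ⟨rfl, rfl⟩⟩
  have hOpen : IsOpenMap (Prod.map
      (QuotientGroup.mk : Kprime → Kprime ⧸ KprimeCenter) (id : KprimeGamma → KprimeGamma)) :=
    QuotientGroup.isOpenMap_coe.prodMap IsOpenMap.id
  have hqm : Topology.IsQuotientMap (Prod.map
      (QuotientGroup.mk : Kprime → Kprime ⧸ KprimeCenter) (id : KprimeGamma → KprimeGamma)) :=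
    hOpen.isQuotientMap (QuotientGroup.continuous_mk.prodMap continuous_id)
      ((QuotientGroup.mk_surjective).prodMap Function.surjective_id)
  rw [hqm.continuous_iff]
  have heq : ⇑(MulEquiv.ofBijective eHom hbij).symm ∘
      (Prod.map (QuotientGroup.mk : Kprime → Kprime ⧸ KprimeCenter) id) = F := by
    funext p
    apply (MulEquiv.ofBijective eHom hbij).injective
    rw [Function.comp_apply, MulEquiv.apply_symm_apply]
    exact (eHom_F p).symm
  rw [heq]
  exact F_continuous
end

section
/- Let A be a commutative ring, I \subseteq A an ideal, and M a finitely generated A-module that is nearly faithful (i.e. Ann_A(M) is nilpotent). Then M/IM is a nearly faithful A/I-module provided that every minimal prime of A/I is the image of a minimal prime of A in the support of M; in particular if A acts nearly faithfully on M and Spec(A/I) is a union of irreducible components of Spec A, then A/I acts nearly faithfully on M/IM. -/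
/-- Let `A` be a commutative ring, `I ⊆ A` an ideal, and `M` a finitely generated `A`-module
that is nearly faithful (i.e. `Ann_A(M)` is nilpotent, equivalently contained in the
nilradical).  Then `M/IM` is a nearly faithful `A/I`-module provided that every minimal
prime of `A/I` (i.e. every prime of `A` minimal over `I`) is the image of a minimal prime
of `A` lying in the support of `M`. -/
theorem stmt_17 (A : Type) [CommRing A] (I : Ideal A)
    (M : Type) [AddCommGroup M] [Module A M] [Module.Finite A M]
    (hfaith : Module.annihilator A M ≤ nilradical A)
    (hmin : ∀ p ∈ I.minimalPrimes, p ∈ minimalPrimes A ∧ Module.annihilator A M ≤ p) :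
    Module.annihilator (A ⧸ I) (M ⧸ (I • (⊤ : Submodule A M))) ≤ nilradical (A ⧸ I) := by
  rw [nilradical_eq_sInf]
  refine le_sInf fun q hq => fun x hx => ?_
  haveI hqp : q.IsPrime := hq
  obtain ⟨a, rfl⟩ := Ideal.Quotient.mk_surjective x
  set P := q.comap (Ideal.Quotient.mk I) with hPdef
  haveI : P.IsPrime := Ideal.IsPrime.comap _
  have hIP : I ≤ P := fun i hi => by
    simp only [hPdef, Ideal.mem_comap, Ideal.Quotient.eq_zero_iff_mem.mpr hi]
    exact q.zero_mem
  obtain ⟨p, hp, hpP⟩ := Ideal.exists_minimalPrimes_le hIP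
  obtain ⟨hpmin, hann⟩ := hmin p hp
  haveI hpprime : p.IsPrime := hp.1.1
  have hIp : I ≤ p := hp.1.2
  -- It suffices to show `a ∈ p`.
  suffices hap : a ∈ p by
    show a ∈ P
    exact hpP hap
  -- `a • M ⊆ I • M`
  have hsmul : LinearMap.range (a • (LinearMap.id : M →ₗ[A] M)) ≤ I • (⊤ : Submodule A M) := by
    rintro _ ⟨m, rfl⟩
    have h0 := Module.mem_annihilator.mp hx
      (Submodule.Quotient.mk (p := (I • ⊤ : Submodule A M)) m)
    rw [Module.Quotient.mk_smul_mk, Submodule.Quotient.mk_eq_zero] at h0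
    simpa using h0
  obtain ⟨f, hmonic, -, hcoeff, heval⟩ :=
    LinearMap.exists_monic_and_coeff_mem_pow_and_aeval_eq_zero_of_range_le_smul A
      (a • (LinearMap.id : M →ₗ[A] M)) I hsmul
  -- `f.eval a` annihilates `M`
  have hevala : f.eval a ∈ Module.annihilator A M := by
    rw [Module.mem_annihilator]
    intro m
    have : (a • (LinearMap.id : M →ₗ[A] M)) = (algebraMap A (Module.End A M)) a := rfl
    rw [this, Polynomial.aeval_algebraMap_apply] at heval
    have := congrArg (fun g : Module.End A M => g m) heval
    simpa [Algebra.algebraMap_eq_smul_one] using this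
  have hfa : f.eval a ∈ p := hann hevala
  -- write eval as a^n + lower terms in I
  have hn : f.natDegree ≠ 0 ∨ (1:A) ∈ p := by
    by_cases h : f.natDegree = 0
    · right
      have : f = 1 := by
        have := Polynomial.eq_one_of_monic_natDegree_zero hmonic h
        exact this
      simpa [this] using hfa
    · left; exact h
  rcases hn with hn | hone
  · -- a ^ natDegree ∈ p
    have hpow : a ^ f.natDegree ∈ p := by
      have hsum : f.eval a =
          ∑ k ∈ Finset.range (f.natDegree + 1), f.coeff k * a ^ k := by
        conv_lhs => rw [Polynomial.eval_eq_sum_range]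
      have hlead : f.coeff f.natDegree = 1 := hmonic.coeff_natDegree
      have hrest : ∀ k ∈ Finset.range f.natDegree, f.coeff k * a ^ k ∈ p := by
        intro k hk
        rw [Finset.mem_range] at hk
        have hco : f.coeff k ∈ I ^ (f.natDegree - k) := hcoeff k
        have hpos : 0 < f.natDegree - k := Nat.sub_pos_of_lt hk
        have : f.coeff k ∈ I := by
          have := Ideal.pow_le_self (Nat.pos_iff_ne_zero.mp hpos) (I := I) hco
          exact this
        exact p.mul_mem_right _ (hIp this)
      have : a ^ f.natDegree ∈ p := by
        have hsum' : f.eval a = (∑ k ∈ Finset.range f.natDegree, f.coeff k * a ^ k)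
            + a ^ f.natDegree := by
          rw [hsum, Finset.sum_range_succ, hlead, one_mul]
        have hsumsub : (∑ k ∈ Finset.range f.natDegree, f.coeff k * a ^ k) ∈ p :=
          Ideal.sum_mem p hrest
        have : a ^ f.natDegree = f.eval a - ∑ k ∈ Finset.range f.natDegree,
            f.coeff k * a ^ k := by rw [hsum']; ring
        rw [this]
        exact p.sub_mem hfa hsumsub
      exact this
    exact hpprime.mem_of_pow_mem _ hpow
  · exact absurd (p.eq_top_iff_one.mpr hone) hpprime.ne_top
end
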